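/- arXiv:1406.0142 — 3 statements merged into one kernel-verified Lean document; each statement's English description precedes it below -/
import Mathlib

section
/- There is an absolute constant C > 0 such that the following holds. Let μ be a permutation-invariant probability measure on ℝⁿ with respect to which all polynomials are integrable, let f be a multilinear polynomial in x₁,…,xₙ, and let τ > 0. Then there exists a set S ⊆ [n] with |S| ≤ C·Inf[f]/τ such that Inf_{ij}[f] < τ whenever i, j ∉ S. -/
open MvPolynomial MeasureTheory

/-- A multilinear polynomial: every monomial is squarefree. -/
def IsMultilinear {n : ℕ} (P : MvPolynomial (Fin n) ℝ) : Prop :=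
  ∀ m ∈ P.support, ∀ i, m i ≤ 1

/-- A permutation-invariant probability measure on `ℝⁿ`. -/
def PermInvariant {n : ℕ} (μ : Measure (Fin n → ℝ)) : Prop :=
  ∀ π : Equiv.Perm (Fin n), Measure.map (fun x => x ∘ π) μ = μ

/-- The influence of the pair `(i,j)`: `Inf_{ij}[f] = ½ E_μ[(f^{(i j)} - f)²]`,
where `f^{(i j)}` is `f` with the variables `x_i` and `x_j` swapped. -/
noncomputable def pairInf {n : ℕ} (μ : Measure (Fin n → ℝ))
    (f : MvPolynomial (Fin n) ℝ) (i j : Fin n) : ℝ :=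
  (1 / 2) * ∫ x, (eval x (MvPolynomial.rename (⇑(Equiv.swap i j)) f) - eval x f) ^ 2 ∂μ

/-- The total influence `Inf[f] = (1/n) ∑_{i<j} Inf_{ij}[f]`. -/
noncomputable def totalInf {n : ℕ} (μ : Measure (Fin n → ℝ))
    (f : MvPolynomial (Fin n) ℝ) : ℝ :=
  (1 / (n : ℝ)) * ∑ p ∈ Finset.univ.filter (fun p : Fin n × Fin n => p.1 < p.2),
    pairInf μ f p.1 p.2

section aux
variable {n : ℕ} {μ : Measure (Fin n → ℝ)}

noncomputable def nsq (μ : Measure (Fin n → ℝ)) (P : MvPolynomial (Fin n) ℝ) : ℝ :=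
  ∫ x, (eval x P) ^ 2 ∂μ

lemma nsq_nonneg (μ : Measure (Fin n → ℝ)) (P : MvPolynomial (Fin n) ℝ) : 0 ≤ nsq μ P :=
  integral_nonneg fun _ => sq_nonneg _

variable (hInt : ∀ P : MvPolynomial (Fin n) ℝ, Integrable (fun x => eval x P) μ)
include hInt

lemma integrable_eval_sq (P : MvPolynomial (Fin n) ℝ) :
    Integrable (fun x => (eval x P) ^ 2) μ := by
  simpa [map_mul, pow_two] using hInt (P * P)

lemma memL2_eval (P : MvPolynomial (Fin n) ℝ) : MemLp (fun x => eval x P) 2 μ :=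
  (memLp_two_iff_integrable_sq (hInt P).aestronglyMeasurable).2 (integrable_eval_sq hInt P)

lemma integral_eval_mul_le (A B : MvPolynomial (Fin n) ℝ) :
    ∫ x, eval x A * eval x B ∂μ ≤ Real.sqrt (nsq μ A) * Real.sqrt (nsq μ B) := by
  have hpq : (2:ℝ).HolderConjugate 2 := Real.HolderConjugate.two_two
  have h2 : (ENNReal.ofReal (2:ℝ)) = 2 := by norm_num
  have hA := memL2_eval hInt A
  have hB := memL2_eval hInt B
  have key := integral_mul_norm_le_Lp_mul_Lq (μ := μ) hpq (h2 ▸ hA) (h2 ▸ hB)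
  have e1 : ∀ P : MvPolynomial (Fin n) ℝ,
      (∫ x, ‖eval x P‖ ^ (2:ℝ) ∂μ) ^ (1/(2:ℝ)) = Real.sqrt (nsq μ P) := by
    intro P
    rw [Real.sqrt_eq_rpow, nsq]
    congr 1
    refine integral_congr_ae (Filter.Eventually.of_forall fun x => ?_)
    simp only [Real.rpow_two, Real.norm_eq_abs, sq_abs]
  rw [e1 A, e1 B] at key
  refine le_trans ?_ key
  have hint : Integrable (fun x => ‖eval x A‖ * ‖eval x B‖) μ := by
    have := (hInt (A * B)).abs
    simpa [map_mul, abs_mul] using this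
  have hint2 : Integrable (fun x => eval x A * eval x B) μ := by
    simpa [map_mul] using hInt (A * B)
  exact integral_mono hint2 hint fun x => by
    calc eval x A * eval x B ≤ |eval x A * eval x B| := le_abs_self _
    _ = ‖eval x A‖ * ‖eval x B‖ := by rw [abs_mul]; rfl

lemma sqrt_nsq_add (A B : MvPolynomial (Fin n) ℝ) :
    Real.sqrt (nsq μ (A + B)) ≤ Real.sqrt (nsq μ A) + Real.sqrt (nsq μ B) := by
  have h : nsq μ (A + B) ≤ (Real.sqrt (nsq μ A) + Real.sqrt (nsq μ B)) ^ 2 := by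
    have iA := integrable_eval_sq hInt A
    have iB := integrable_eval_sq hInt B
    have iAB : Integrable (fun x => eval x A * eval x B) μ := by
      simpa [map_mul] using hInt (A * B)
    have expand : nsq μ (A + B) = nsq μ A + 2 * ∫ x, eval x A * eval x B ∂μ + nsq μ B := by
      unfold nsq
      have he : (fun x : Fin n → ℝ => (eval x (A+B))^2)
          = fun x => (eval x A)^2 + (2 * (eval x A * eval x B) + (eval x B)^2) :=
        funext fun x => by rw [map_add]; ring
      have i2 : Integrable (fun x => 2 * (eval x A * eval x B) + (eval x B)^2) μ :=
        (iAB.const_mul 2).add iB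
      rw [he, integral_add iA i2,
        integral_add (iAB.const_mul 2) iB, integral_const_mul]
      ring
    have cs := integral_eval_mul_le hInt A B
    have sA := Real.sq_sqrt (nsq_nonneg μ A)
    have sB := Real.sq_sqrt (nsq_nonneg μ B)
    nlinarith [Real.sqrt_nonneg (nsq μ A), Real.sqrt_nonneg (nsq μ B)]
  calc Real.sqrt (nsq μ (A+B)) ≤ Real.sqrt ((Real.sqrt (nsq μ A) + Real.sqrt (nsq μ B))^2) :=
        Real.sqrt_le_sqrt h
    _ = _ := Real.sqrt_sq (by positivity)

lemma nsq_rename (hperm : PermInvariant μ) (σ : Equiv.Perm (Fin n))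
    (P : MvPolynomial (Fin n) ℝ) : nsq μ (rename (⇑σ) P) = nsq μ P := by
  unfold nsq
  have hmeas : Measurable fun x : Fin n → ℝ => x ∘ σ :=
    measurable_pi_lambda _ fun i => measurable_pi_apply _
  conv_rhs => rw [← hperm σ]
  rw [integral_map hmeas.aemeasurable]
  · simp_rw [eval_rename]
  · rw [hperm σ]
    exact (integrable_eval_sq hInt P).aestronglyMeasurable

end aux

section aux2
variable {n : ℕ} {μ : Measure (Fin n → ℝ)}

lemma pairInf_eq (f : MvPolynomial (Fin n) ℝ) (i j : Fin n) :
    pairInf μ f i j = (1 / 2) * nsq μ (rename (⇑(Equiv.swap i j)) f - f) := by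
  unfold pairInf nsq
  simp [map_sub]

lemma pairInf_nonneg (f : MvPolynomial (Fin n) ℝ) (i j : Fin n) : 0 ≤ pairInf μ f i j := by
  rw [pairInf_eq]
  exact mul_nonneg (by norm_num) (nsq_nonneg μ _)

lemma pairInf_self (f : MvPolynomial (Fin n) ℝ) (i : Fin n) : pairInf μ f i i = 0 := by
  rw [pairInf_eq, Equiv.swap_self]
  simp [nsq, rename_id]

lemma pairInf_comm (f : MvPolynomial (Fin n) ℝ) (i j : Fin n) :
    pairInf μ f i j = pairInf μ f j i := by
  rw [pairInf_eq, pairInf_eq, Equiv.swap_comm]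

lemma swap_decomp {i j k : Fin n} (hij : i ≠ j) (hik : k ≠ i) (hjk : k ≠ j) :
    ⇑(Equiv.swap i j) = ⇑(Equiv.swap i k) ∘ ⇑(Equiv.swap k j) ∘ ⇑(Equiv.swap i k) := by
  funext x
  simp only [Function.comp_apply, Equiv.swap_apply_def]
  split_ifs <;> simp_all

lemma pair_triangle (hperm : PermInvariant μ)
    (hInt : ∀ P : MvPolynomial (Fin n) ℝ, Integrable (fun x => eval x P) μ)
    (f : MvPolynomial (Fin n) ℝ) {i j k : Fin n} (hij : i ≠ j) (hik : k ≠ i) (hjk : k ≠ j) :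
    pairInf μ f i j ≤ 6 * (pairInf μ f i k + pairInf μ f j k) := by
  set s1 := Equiv.swap i k with hs1
  set s2 := Equiv.swap k j with hs2
  have h1 : rename (⇑(Equiv.swap i j)) f = rename ⇑s1 (rename ⇑s2 (rename ⇑s1 f)) := by
    rw [rename_rename, rename_rename, swap_decomp hij hik hjk]
    rfl
  have hdec : rename (⇑(Equiv.swap i j)) f - f
      = rename (⇑(s1 * s2)) (rename ⇑s1 f - f)
        + (rename ⇑s1 (rename ⇑s2 f - f) + (rename ⇑s1 f - f)) := by
    rw [h1]
    simp only [map_sub, Equiv.Perm.coe_mul, ← rename_rename]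
    ring
  set a := Real.sqrt (nsq μ (rename (⇑s1) f - f)) with ha
  set b := Real.sqrt (nsq μ (rename (⇑s2) f - f)) with hb
  have htri : Real.sqrt (nsq μ (rename (⇑(Equiv.swap i j)) f - f)) ≤ 2 * a + b := by
    rw [hdec]
    calc Real.sqrt (nsq μ _)
        ≤ Real.sqrt (nsq μ (rename (⇑(s1 * s2)) (rename ⇑s1 f - f)))
          + Real.sqrt (nsq μ (rename ⇑s1 (rename ⇑s2 f - f) + (rename ⇑s1 f - f))) :=
          sqrt_nsq_add hInt _ _
      _ ≤ Real.sqrt (nsq μ (rename (⇑(s1 * s2)) (rename ⇑s1 f - f)))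
          + (Real.sqrt (nsq μ (rename ⇑s1 (rename ⇑s2 f - f)))
            + Real.sqrt (nsq μ (rename ⇑s1 f - f))) := by
          gcongr
          exact sqrt_nsq_add hInt _ _
      _ = 2 * a + b := by
          rw [nsq_rename hInt hperm (s1 * s2), nsq_rename hInt hperm s1]
          ring
  have hsq : nsq μ (rename (⇑(Equiv.swap i j)) f - f) ≤ (2 * a + b) ^ 2 := by
    have h0 := nsq_nonneg μ (rename (⇑(Equiv.swap i j)) f - f)
    have := Real.sqrt_le_sqrt (le_of_eq (rfl : nsq μ (rename (⇑(Equiv.swap i j)) f - f) = _))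
    nlinarith [Real.sq_sqrt h0, Real.sqrt_nonneg (nsq μ (rename (⇑(Equiv.swap i j)) f - f)),
      htri, Real.sqrt_nonneg (nsq μ (rename (⇑s1) f - f)), Real.sqrt_nonneg (nsq μ (rename (⇑s2) f - f))]
  have hik' : pairInf μ f i k = (1/2) * a ^ 2 := by
    rw [pairInf_eq, ha, Real.sq_sqrt (nsq_nonneg μ _)]
  have hjk' : pairInf μ f j k = (1/2) * b ^ 2 := by
    rw [pairInf_comm, pairInf_eq, hb, Real.sq_sqrt (nsq_nonneg μ _)]
  have hij' : pairInf μ f i j = (1/2) * nsq μ (rename (⇑(Equiv.swap i j)) f - f) :=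
    pairInf_eq f i j
  have hA : 0 ≤ a := Real.sqrt_nonneg _
  have hB : 0 ≤ b := Real.sqrt_nonneg _
  nlinarith [sq_nonneg (a - b), sq_nonneg (a + b)]

end aux2

/-- There is an absolute constant `C > 0` such that for every permutation-invariant
probability measure, every multilinear polynomial `f` and every `τ > 0`, there is a
set `S` of at most `C·Inf[f]/τ` coordinates such that `Inf_{ij}[f] < τ` whenever
`i, j ∉ S`. -/
theorem small_influences_off_a_small_set :
    ∃ C : ℝ, 0 < C ∧ ∀ (n : ℕ) (μ : Measure (Fin n → ℝ)),
      IsProbabilityMeasure μ → PermInvariant μ →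
      (∀ P : MvPolynomial (Fin n) ℝ, Integrable (fun x => eval x P) μ) →
      ∀ f : MvPolynomial (Fin n) ℝ, IsMultilinear f →
      ∀ τ : ℝ, 0 < τ →
      ∃ S : Finset (Fin n), (S.card : ℝ) ≤ C * totalInf μ f / τ ∧
        ∀ i j : Fin n, i ∉ S → j ∉ S → pairInf μ f i j < τ := by
  refine ⟨24, by norm_num, ?_⟩
  intro n μ hprob hperm hInt f hf τ hτ
  set p : Fin n → Fin n → ℝ := fun i j => pairInf μ f i j with hp
  set I : Fin n → ℝ := fun i => ∑ k, p i k with hI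
  set S : Finset (Fin n) := Finset.univ.filter (fun i => (n : ℝ) * τ / 12 ≤ I i) with hS
  have hI_nonneg : ∀ i, 0 ≤ I i := fun i => Finset.sum_nonneg fun k _ => pairInf_nonneg f i k
  -- T is the sum over ordered pairs i < j
  set T : ℝ := ∑ q ∈ Finset.univ.filter (fun q : Fin n × Fin n => q.1 < q.2), p q.1 q.2 with hT
  have htotal : totalInf μ f = (1 / (n : ℝ)) * T := rfl
  -- sum over all pairs equals 2T
  have hall : ∑ i, I i = 2 * T := by
    have h1 : ∑ i, I i = ∑ q ∈ Finset.univ ×ˢ (Finset.univ : Finset (Fin n)), p q.1 q.2 := by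
      rw [Finset.sum_product]
    have h2 : ∑ q ∈ Finset.univ ×ˢ (Finset.univ : Finset (Fin n)), p q.1 q.2
        = T + ∑ q ∈ (Finset.univ ×ˢ Finset.univ).filter
            (fun q : Fin n × Fin n => ¬ q.1 < q.2), p q.1 q.2 := by
      rw [hT, ← Finset.sum_filter_add_sum_filter_not (Finset.univ ×ˢ Finset.univ)
        (fun q : Fin n × Fin n => q.1 < q.2)]
      congr 1
    have h3 : ∑ q ∈ (Finset.univ ×ˢ Finset.univ).filter
        (fun q : Fin n × Fin n => ¬ q.1 < q.2), p q.1 q.2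
        = ∑ q ∈ (Finset.univ ×ˢ Finset.univ).filter
            (fun q : Fin n × Fin n => q.2 < q.1), p q.1 q.2 := by
      symm
      refine Finset.sum_subset ?_ ?_
      · intro x hx
        simp only [Finset.mem_filter] at hx ⊢
        exact ⟨hx.1, not_lt_of_gt hx.2⟩
      · intro x hx hx'
        simp only [Finset.mem_filter] at hx hx'
        have : x.1 = x.2 := le_antisymm (not_lt.1 (hx'  ∘ fun h => ⟨hx.1, h⟩)) (not_lt.1 hx.2)
        rw [hp]
        simp only
        rw [this, pairInf_self]
    have h4 : ∑ q ∈ (Finset.univ ×ˢ Finset.univ).filter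
        (fun q : Fin n × Fin n => q.2 < q.1), p q.1 q.2 = T := by
      rw [hT]
      refine Finset.sum_bij' (fun q _ => Prod.swap q) (fun q _ => Prod.swap q) ?_ ?_ ?_ ?_ ?_
      · intro a ha
        simp only [Finset.mem_filter, Finset.mem_product, Finset.mem_univ, true_and,
          Prod.fst_swap, Prod.snd_swap] at ha ⊢
        exact ha
      · intro a ha
        simp only [Finset.mem_filter, Finset.mem_product, Finset.mem_univ, true_and,
          Prod.fst_swap, Prod.snd_swap] at ha ⊢
        exact ha
      · intro a _; exact Prod.swap_swap a
      · intro a _; exact Prod.swap_swap a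
      · intro a _
        exact pairInf_comm f a.1 a.2
    rw [h1, h2, h3, h4]; ring
  refine ⟨S, ?_, ?_⟩
  · -- cardinality bound
    rcases Nat.eq_zero_or_pos n with hn | hn
    · subst hn
      have : S = ∅ := Finset.eq_empty_of_forall_notMem fun i _ => i.elim0
      rw [this]
      have hT0 : T = 0 := by
        rw [hT]
        apply Finset.sum_eq_zero
        intro q hq
        exact q.1.elim0
      rw [htotal, hT0]
      simp
    · have hcard : (S.card : ℝ) * ((n : ℝ) * τ / 12) ≤ ∑ i ∈ S, I i := by
        have := Finset.card_nsmul_le_sum S I ((n : ℝ) * τ / 12)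
          (fun i hi => (Finset.mem_filter.1 hi).2)
        simpa [nsmul_eq_mul] using this
      have hsum : ∑ i ∈ S, I i ≤ ∑ i, I i :=
        Finset.sum_le_sum_of_subset_of_nonneg (Finset.subset_univ S)
          (fun i _ _ => hI_nonneg i)
      have hnpos : (0 : ℝ) < n := by exact_mod_cast hn
      rw [htotal, le_div_iff₀ hτ]
      have key : (S.card : ℝ) * ((n : ℝ) * τ / 12) ≤ 2 * T := by
        calc (S.card : ℝ) * ((n : ℝ) * τ / 12) ≤ ∑ i ∈ S, I i := hcard
          _ ≤ ∑ i, I i := hsum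
          _ = 2 * T := hall
      have hcard0 : (0:ℝ) ≤ (S.card : ℝ) := Nat.cast_nonneg _
      rw [show (24 : ℝ) * ((1 / (n : ℝ)) * T) = 24 * T / n by ring, le_div_iff₀ hnpos]
      nlinarith
  · -- small pairwise influences off S
    intro i j hiS hjS
    have hIi : I i < (n : ℝ) * τ / 12 := by
      by_contra h
      exact hiS (Finset.mem_filter.2 ⟨Finset.mem_univ _, not_lt.1 h⟩)
    have hIj : I j < (n : ℝ) * τ / 12 := by
      by_contra h
      exact hjS (Finset.mem_filter.2 ⟨Finset.mem_univ _, not_lt.1 h⟩)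
    rcases eq_or_ne i j with rfl | hij
    · rw [show pairInf μ f i i = 0 from pairInf_self f i]; exact hτ
    by_contra hcon
    push_neg at hcon
    have hn2 : 2 ≤ n := by
      have : Nontrivial (Fin n) := ⟨⟨i, j, hij⟩⟩
      have := Fintype.one_lt_card (α := Fin n)
      simpa [Nat.succ_le_iff] using this
    have hk : ∀ k, k ≠ i → k ≠ j → τ / 6 ≤ p i k + p j k := by
      intro k hki hkj
      have := pair_triangle hperm hInt f hij hki hkj
      have h6 : τ ≤ 6 * (p i k + p j k) := le_trans hcon this
      linarith
    have hij_mem : ({i, j} : Finset (Fin n)) ⊆ Finset.univ := Finset.subset_univ _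
    have hsplit : ∑ k ∈ Finset.univ \ {i, j}, (p i k + p j k)
        + ∑ k ∈ ({i, j} : Finset (Fin n)), (p i k + p j k)
        = ∑ k, (p i k + p j k) := Finset.sum_sdiff hij_mem
    have hpair_sum : ∑ k ∈ ({i, j} : Finset (Fin n)), (p i k + p j k) = 2 * p i j := by
      rw [Finset.sum_pair hij]
      have h1 : p i i = 0 := pairInf_self f i
      have h2 : p j j = 0 := pairInf_self f j
      have h3 : p j i = p i j := pairInf_comm f j i
      rw [hp] at *
      simp only at *
      rw [h1, h2, h3]; ring
    have hcard_sdiff : (Finset.univ \ ({i, j} : Finset (Fin n))).card = n - 2 := by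
      rw [Finset.card_sdiff_of_subset hij_mem, Finset.card_univ, Fintype.card_fin,
        Finset.card_pair hij]
    have hlower : ((n - 2 : ℕ) : ℝ) * (τ / 6) ≤ ∑ k ∈ Finset.univ \ {i, j}, (p i k + p j k) := by
      rw [← hcard_sdiff]
      have := Finset.card_nsmul_le_sum (Finset.univ \ ({i, j} : Finset (Fin n)))
        (fun k => p i k + p j k) (τ / 6) ?_
      · simpa [nsmul_eq_mul] using this
      · intro k hk'
        simp only [Finset.mem_sdiff, Finset.mem_insert, Finset.mem_singleton] at hk'
        exact hk k (fun h => hk'.2 (Or.inl h)) (fun h => hk'.2 (Or.inr h))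
    have hIsum : ∑ k, (p i k + p j k) = I i + I j := by
      rw [hI, Finset.sum_add_distrib]
    have hcast : ((n - 2 : ℕ) : ℝ) = (n : ℝ) - 2 := by
      rw [Nat.cast_sub hn2]; norm_num
    have hn2' : (2 : ℝ) ≤ (n : ℝ) := by exact_mod_cast hn2
    rw [hcast] at hlower
    have : I i + I j < (n : ℝ) * τ / 6 := by linarith
    have hge : ((n : ℝ) - 2) * (τ / 6) + 2 * τ ≤ I i + I j := by
      rw [← hIsum, ← hsplit]
      have := hcon
      linarith [hlower, hpair_sum, hcon]
    linarith
end

section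
/- Let m ∈ [n−1], write π for the transposition (m, m+1), and for a polynomial g let g^π denote g with the variables x_m and x_{m+1} swapped. Then the following polynomial identities hold for top sets B of [n]: (1) if both m ∉ B and m+1 ∉ B, or both m ∈ B and m+1 ∈ B, then χ_B^π = χ_B; (2) if B ∈ B_n has b_{i+1} = m and m+1 ∉ B, and B^π (obtained from B by replacing m with m+1) is also a top set, then χ_B^π = (1/(m−2i))·χ_B + ((m−2i−1)/(m−2i))·χ_{B^π} and χ_{B^π}^π = (−1/(m−2i))·χ_{B^π} + ((m−2i+1)/(m−2i))·χ_B; (3) if B ∈ B_n has b_{i+1} = m, m+1 ∉ B, and B^π is not a top set (which forces m = 2i+1), then χ_B^π = χ_B. -/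
open MvPolynomial

/-- `B : Fin d → Fin n` is a top set if it is strictly increasing and there is a
sequence `A` of `d` distinct elements, disjoint from `B`, with `A i < B i` for all `i`. -/
def IsTopSet {n d : ℕ} (B : Fin d → Fin n) : Prop :=
  StrictMono B ∧ ∃ A : Fin d → Fin n,
    Function.Injective A ∧ (∀ i j, A i ≠ B j) ∧ ∀ i, A i < B i

/-- `χ_{A,B} = ∏ i (x_{a_i} - x_{b_i})`. -/
noncomputable def chiAB {n d : ℕ} (A B : Fin d → Fin n) : MvPolynomial (Fin n) ℝ :=
  ∏ i, (X (A i) - X (B i))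

open Classical in
/-- `χ_B = ∑_{A < B, A disjoint from B} χ_{A,B}`. -/
noncomputable def chiB {n d : ℕ} (B : Fin d → Fin n) : MvPolynomial (Fin n) ℝ :=
  ∑ A ∈ Finset.univ.filter (fun A : Fin d → Fin n =>
      Function.Injective A ∧ (∀ i j, A i ≠ B j) ∧ ∀ i, A i < B i),
    chiAB A B


open Classical in
noncomputable def Adm {n d : ℕ} (B : Fin d → Fin n) : Finset (Fin d → Fin n) :=
  Finset.univ.filter (fun A : Fin d → Fin n =>
      Function.Injective A ∧ (∀ i j, A i ≠ B j) ∧ ∀ i, A i < B i)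

lemma chiB_eq {n d : ℕ} (B : Fin d → Fin n) : chiB B = ∑ A ∈ Adm B, chiAB A B := rfl

lemma mem_Adm {n d : ℕ} {B A : Fin d → Fin n} :
    A ∈ Adm B ↔ Function.Injective A ∧ (∀ i j, A i ≠ B j) ∧ ∀ i, A i < B i := by
  classical
  simp [Adm]

lemma rename_chiAB {n d : ℕ} (σ : Equiv.Perm (Fin n)) (A B : Fin d → Fin n) :
    rename (⇑σ) (chiAB A B) = chiAB (⇑σ ∘ A) (⇑σ ∘ B) := by
  simp [chiAB, map_prod, Function.comp]

lemma rename_chiB {n d : ℕ} (σ : Equiv.Perm (Fin n)) (B : Fin d → Fin n) :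
    rename (⇑σ) (chiB B) = ∑ A ∈ Adm B, chiAB (⇑σ ∘ A) (⇑σ ∘ B) := by
  rw [chiB_eq, map_sum]
  exact Finset.sum_congr rfl fun A _ => rename_chiAB σ A B

lemma swap_comp_swap_comp {n d : ℕ} (a b : Fin n) (A : Fin d → Fin n) :
    ⇑(Equiv.swap a b) ∘ (⇑(Equiv.swap a b) ∘ A) = A := by
  funext k; simp

-- part 1, case a,b ∉ range B : membership preservation
lemma adm_swap_mem {n d : ℕ} {B A : Fin d → Fin n} {a b : Fin n} (hab : (b:ℕ) = a + 1)
    (ha : ∀ j, B j ≠ a) (hb : ∀ j, B j ≠ b) (hA : A ∈ Adm B) :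
    ⇑(Equiv.swap a b) ∘ A ∈ Adm B := by
  rw [mem_Adm] at hA ⊢
  obtain ⟨h1, h2, h3⟩ := hA
  have hσB : ∀ j, Equiv.swap a b (B j) = B j := fun j =>
    Equiv.swap_apply_of_ne_of_ne (ha j) (hb j)
  refine ⟨(Equiv.swap a b).injective.comp h1, ?_, ?_⟩
  · intro k j h
    exact h2 k j ((Equiv.swap a b).injective (by simpa [hσB j] using h))
  · intro k
    by_cases hka : A k = a
    · have : Equiv.swap a b (A k) = b := by rw [hka]; simp
      rw [Function.comp_apply, this]
      have h4 : (A k : ℕ) < B k := h3 k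
      have h5 : (B k : ℕ) ≠ b := fun h => hb k (Fin.ext h)
      have h6 : (A k : ℕ) = a := congrArg Fin.val hka
      rw [Fin.lt_def]
      omega
    · by_cases hkb : A k = b
      · have : Equiv.swap a b (A k) = a := by rw [hkb]; simp
        rw [Function.comp_apply, this]
        have h4 : (A k : ℕ) < B k := h3 k
        have h6 : (A k : ℕ) = b := congrArg Fin.val hkb
        rw [Fin.lt_def]
        omega
      · rw [Function.comp_apply, Equiv.swap_apply_of_ne_of_ne hka hkb]
        exact h3 k

lemma part1a {n d : ℕ} (B : Fin d → Fin n) (a b : Fin n) (hab : (b:ℕ) = a + 1)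
    (ha : ∀ j, B j ≠ a) (hb : ∀ j, B j ≠ b) :
    rename (⇑(Equiv.swap a b)) (chiB B) = chiB B := by
  rw [rename_chiB, chiB_eq]
  have hσB : ⇑(Equiv.swap a b) ∘ B = B := funext fun j =>
    Equiv.swap_apply_of_ne_of_ne (ha j) (hb j)
  rw [hσB]
  exact Finset.sum_nbij' (fun A => ⇑(Equiv.swap a b) ∘ A) (fun A => ⇑(Equiv.swap a b) ∘ A)
    (fun A hA => adm_swap_mem hab ha hb hA)
    (fun A hA => adm_swap_mem hab ha hb hA)
    (fun A _ => swap_comp_swap_comp a b A)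
    (fun A _ => swap_comp_swap_comp a b A)
    (fun A _ => rfl)

lemma adm_swap_mem2 {n d : ℕ} {B A : Fin d → Fin n} {a b : Fin n} {i j : Fin d}
    (hab : (b:ℕ) = a + 1) (hBi : B i = a) (hBj : B j = b) (hBinj : Function.Injective B)
    (hA : A ∈ Adm B) :
    ⇑(Equiv.swap a b) ∘ A ∘ ⇑(Equiv.swap i j) ∈ Adm B := by
  rw [mem_Adm] at hA ⊢
  obtain ⟨h1, h2, h3⟩ := hA
  have hσB : ∀ l, Equiv.swap a b (B l) = B (Equiv.swap i j l) := by
    intro l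
    by_cases hli : l = i
    · subst hli; rw [hBi]; simp [hBj]
    · by_cases hlj : l = j
      · subst hlj; rw [hBj]; simp [hBi]
      · rw [Equiv.swap_apply_of_ne_of_ne (fun h => hli (hBinj (h.trans hBi.symm)))
          (fun h => hlj (hBinj (h.trans hBj.symm))),
          Equiv.swap_apply_of_ne_of_ne hli hlj]
  have hAne : ∀ k, A k ≠ a ∧ A k ≠ b := fun k =>
    ⟨fun h => h2 k i (h.trans hBi.symm), fun h => h2 k j (h.trans hBj.symm)⟩
  refine ⟨(Equiv.swap a b).injective.comp (h1.comp (Equiv.swap i j).injective), ?_, ?_⟩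
  · intro k l h
    simp only [Function.comp_apply] at h
    have : A (Equiv.swap i j k) = Equiv.swap a b (B l) := by
      rw [← h, Equiv.swap_apply_self]
    rw [hσB l] at this
    exact h2 _ _ this
  · intro k
    simp only [Function.comp_apply]
    rw [Equiv.swap_apply_of_ne_of_ne (hAne _).1 (hAne _).2]
    by_cases hki : k = i
    · subst hki
      simp only [Equiv.swap_apply_left]
      have h4 : (A j : ℕ) < b := by rw [← hBj]; exact h3 j
      have h5 : (A j : ℕ) ≠ a := fun h => (hAne j).1 (Fin.ext h)
      rw [Fin.lt_def, hBi]
      omega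
    · by_cases hkj : k = j
      · subst hkj
        simp only [Equiv.swap_apply_right]
        have h4 : (A i : ℕ) < a := by rw [← hBi]; exact h3 i
        rw [Fin.lt_def, hBj]
        omega
      · rw [Equiv.swap_apply_of_ne_of_ne hki hkj]
        exact h3 k

lemma part1b {n d : ℕ} (B : Fin d → Fin n) (a b : Fin n) (hab : (b:ℕ) = a + 1)
    {i j : Fin d} (hBi : B i = a) (hBj : B j = b) (hBinj : Function.Injective B) :
    rename (⇑(Equiv.swap a b)) (chiB B) = chiB B := by
  rw [rename_chiB, chiB_eq]
  have hσB : ∀ l, Equiv.swap a b (B l) = B (Equiv.swap i j l) := by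
    intro l
    by_cases hli : l = i
    · subst hli; rw [hBi]; simp [hBj]
    · by_cases hlj : l = j
      · subst hlj; rw [hBj]; simp [hBi]
      · rw [Equiv.swap_apply_of_ne_of_ne (fun h => hli (hBinj (h.trans hBi.symm)))
          (fun h => hlj (hBinj (h.trans hBj.symm))),
          Equiv.swap_apply_of_ne_of_ne hli hlj]
  have key : ∀ A : Fin d → Fin n, chiAB (⇑(Equiv.swap a b) ∘ A) (⇑(Equiv.swap a b) ∘ B)
      = chiAB (⇑(Equiv.swap a b) ∘ A ∘ ⇑(Equiv.swap i j)) B := by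
    intro A
    unfold chiAB
    rw [← Equiv.prod_comp (Equiv.swap i j)
      (fun k => (X ((⇑(Equiv.swap a b) ∘ A) k) - X ((⇑(Equiv.swap a b) ∘ B) k)))]
    refine Finset.prod_congr rfl fun k _ => ?_
    simp only [Function.comp_apply]
    rw [hσB, Equiv.swap_apply_self]
  rw [Finset.sum_congr rfl fun A _ => key A]
  refine Finset.sum_nbij' (fun A => ⇑(Equiv.swap a b) ∘ A ∘ ⇑(Equiv.swap i j))
    (fun A => ⇑(Equiv.swap a b) ∘ A ∘ ⇑(Equiv.swap i j))
    (fun A hA => adm_swap_mem2 hab hBi hBj hBinj hA)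
    (fun A hA => adm_swap_mem2 hab hBi hBj hBinj hA)
    (fun A _ => by funext k; simp)
    (fun A _ => by funext k; simp)
    (fun A _ => rfl)

section Part2
variable {n d : ℕ} {B : Fin d → Fin n} {a b : Fin n} {i : Fin d}

lemma swapB_at_i (hBi : B i = a) : Equiv.swap a b (B i) = b := by
  rw [hBi]; simp

lemma swapB_off_i (hmono : StrictMono B) (hBi : B i = a) (hb : ∀ j, B j ≠ b)
    {k : Fin d} (hk : k ≠ i) : Equiv.swap a b (B k) = B k :=
  Equiv.swap_apply_of_ne_of_ne (fun h => hk (hmono.injective (h.trans hBi.symm))) (hb k)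

lemma Bk_gt_b (hab : (b:ℕ) = a + 1) (hmono : StrictMono B) (hBi : B i = a)
    (hb : ∀ j, B j ≠ b) {k : Fin d} (hk : i < k) : (b : ℕ) < B k := by
  have h1 : (a : ℕ) < B k := by rw [← hBi]; exact hmono hk
  have h2 : (B k : ℕ) ≠ b := fun h => hb k (Fin.ext h)
  omega

lemma Bk_lt_a (hmono : StrictMono B) (hBi : B i = a) {k : Fin d} (hk : k < i) :
    (B k : ℕ) < a := by
  rw [← hBi]; exact hmono hk

lemma mono_B' (hab : (b:ℕ) = a + 1) (hmono : StrictMono B) (hBi : B i = a)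
    (hb : ∀ j, B j ≠ b) : StrictMono (⇑(Equiv.swap a b) ∘ B) := by
  intro k l hkl
  simp only [Function.comp_apply]
  rcases eq_or_ne k i with rfl | hki
  · rw [swapB_at_i hBi, swapB_off_i hmono hBi hb (ne_of_gt hkl)]
    rw [Fin.lt_def]
    exact Bk_gt_b hab hmono hBi hb hkl
  · rcases eq_or_ne l i with rfl | hli
    · rw [swapB_at_i hBi, swapB_off_i hmono hBi hb hki]
      have := Bk_lt_a hmono hBi hkl
      have hab2 : (b : ℕ) = a + 1 := hab
      rw [Fin.lt_def]
      omega
    · rw [swapB_off_i hmono hBi hb hki, swapB_off_i hmono hBi hb hli]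
      exact hmono hkl

/-- forward map: A admissible for B gives sigma A admissible for B'. -/
lemma L1 (hab : (b:ℕ) = a + 1) (hmono : StrictMono B) (hBi : B i = a)
    (hb : ∀ j, B j ≠ b) {A : Fin d → Fin n} (hA : A ∈ Adm B) :
    ⇑(Equiv.swap a b) ∘ A ∈ Adm (⇑(Equiv.swap a b) ∘ B) := by
  rw [mem_Adm] at hA ⊢
  obtain ⟨h1, h2, h3⟩ := hA
  refine ⟨(Equiv.swap a b).injective.comp h1, ?_, ?_⟩
  · intro k l h
    simp only [Function.comp_apply] at h
    exact h2 k l ((Equiv.swap a b).injective h)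
  · intro k
    simp only [Function.comp_apply]
    rcases eq_or_ne k i with rfl | hki
    · have h4 : (A k : ℕ) < a := by
        have := h3 k; rw [hBi, Fin.lt_def] at this; exact this
      have h5 : A k ≠ a := fun h => by rw [h] at h4; omega
      have h6 : A k ≠ b := fun h => by rw [h] at h4; omega
      rw [Equiv.swap_apply_of_ne_of_ne h5 h6, swapB_at_i hBi, Fin.lt_def]
      omega
    · rw [swapB_off_i hmono hBi hb hki]
      have h4 : (A k : ℕ) < B k := h3 k
      have h5 : A k ≠ a := fun h => h2 k i (h.trans hBi.symm)
      rcases eq_or_ne (A k) b with hkb | hkb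
      · rw [hkb, Equiv.swap_apply_right, Fin.lt_def]
        have h7 := congrArg Fin.val hkb
        have h8 : (B k : ℕ) ≠ b := fun h => hb k (Fin.ext h)
        omega
      · rw [Equiv.swap_apply_of_ne_of_ne h5 hkb]
        exact h3 k

/-- sigma A avoids a at position i, for A admissible for B. -/
lemma L1' (hab : (b:ℕ) = a + 1) (hBi : B i = a) {A : Fin d → Fin n} (hA : A ∈ Adm B) :
    (⇑(Equiv.swap a b) ∘ A) i ≠ a := by
  rw [mem_Adm] at hA
  intro h
  simp only [Function.comp_apply] at h
  have h4 : (A i : ℕ) < a := by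
    have := hA.2.2 i; rw [hBi, Fin.lt_def] at this; exact this
  have h6 : A i = b := by
    apply (Equiv.swap a b).injective
    rw [h, Equiv.swap_apply_right]
  have h7 := congrArg Fin.val h6
  omega

/-- backward map -/
lemma L2 (hab : (b:ℕ) = a + 1) (hmono : StrictMono B) (hBi : B i = a)
    (hb : ∀ j, B j ≠ b) {A : Fin d → Fin n} (hA : A ∈ Adm (⇑(Equiv.swap a b) ∘ B))
    (hAi : A i ≠ a) : ⇑(Equiv.swap a b) ∘ A ∈ Adm B := by
  rw [mem_Adm] at hA ⊢
  obtain ⟨h1, h2, h3⟩ := hA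
  simp only [Function.comp_apply] at h2 h3
  refine ⟨(Equiv.swap a b).injective.comp h1, ?_, ?_⟩
  · intro k l h
    simp only [Function.comp_apply] at h
    apply h2 k l
    have : A k = Equiv.swap a b (B l) := by
      rw [← h, Equiv.swap_apply_self]
    exact this
  · intro k
    simp only [Function.comp_apply]
    rcases eq_or_ne k i with rfl | hki
    · have h4 : (A k : ℕ) < b := by
        have := h3 k; rwa [swapB_at_i hBi, Fin.lt_def] at this
      have h5 : (A k : ℕ) ≠ a := fun h => hAi (Fin.ext h)
      have h6 : A k ≠ b := fun h => by rw [h] at h4; omega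
      rw [Equiv.swap_apply_of_ne_of_ne hAi h6, hBi, Fin.lt_def]
      omega
    · have h4 : A k < B k := by
        have := h3 k; rwa [swapB_off_i hmono hBi hb hki] at this
      have h6 : A k ≠ b := fun h => h2 k i (by rw [h, swapB_at_i hBi])
      rcases eq_or_ne (A k) a with hka | hka
      · rw [hka, Equiv.swap_apply_left, Fin.lt_def]
        have h7 : (a : ℕ) < B k := by rw [Fin.lt_def, hka] at h4; exact h4
        have h8 : (B k : ℕ) ≠ b := fun h => hb k (Fin.ext h)
        omega
      · rw [Equiv.swap_apply_of_ne_of_ne hka h6]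
        exact h4

end Part2

section EL
variable {n d : ℕ} {B : Fin d → Fin n} {a b : Fin n} {i : Fin d}

open Classical in
noncomputable def Gset (B : Fin d → Fin n) (a b : Fin n) (i : Fin d) :
    Finset (Fin d → Fin n) :=
  (Adm (⇑(Equiv.swap a b) ∘ B)).filter (fun A => A i = a)

open Classical in
lemma mem_Gset {A : Fin d → Fin n} :
    A ∈ Gset B a b i ↔ A ∈ Adm (⇑(Equiv.swap a b) ∘ B) ∧ A i = a := by
  simp [Gset]

lemma Gset_off_i (hab : (b:ℕ) = a + 1) (hmono : StrictMono B) (hBi : B i = a)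
    (hb : ∀ j, B j ≠ b) {A : Fin d → Fin n} (hA : A ∈ Gset B a b i) {k : Fin d}
    (hk : k ≠ i) : A k ≠ a ∧ A k ≠ b := by
  rw [mem_Gset, mem_Adm] at hA
  obtain ⟨⟨h1, h2, h3⟩, h4⟩ := hA
  constructor
  · intro h; exact hk (h1 (h.trans h4.symm))
  · intro h; exact h2 k i (by rw [h]; simp only [Function.comp_apply]; rw [swapB_at_i hBi])

/-- L3: for A in G, chiAB (σ∘A) B = - chiAB A B' -/
lemma L3 (hab : (b:ℕ) = a + 1) (hmono : StrictMono B) (hBi : B i = a)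
    (hb : ∀ j, B j ≠ b) {A : Fin d → Fin n} (hA : A ∈ Gset B a b i) :
    chiAB (⇑(Equiv.swap a b) ∘ A) B = - chiAB A (⇑(Equiv.swap a b) ∘ B) := by
  have hAi : A i = a := (mem_Gset.mp hA).2
  unfold chiAB
  rw [← Finset.mul_prod_erase _ _ (Finset.mem_univ i),
      ← Finset.mul_prod_erase _ (fun k => X (A k) - X ((⇑(Equiv.swap a b) ∘ B) k))
        (Finset.mem_univ i)]
  have hP : (∏ k ∈ Finset.univ.erase i, (X ((⇑(Equiv.swap a b) ∘ A) k) - X (B k))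
        : MvPolynomial (Fin n) ℝ)
      = ∏ k ∈ Finset.univ.erase i, (X (A k) - X ((⇑(Equiv.swap a b) ∘ B) k)) := by
    refine Finset.prod_congr rfl fun k hk => ?_
    have hki : k ≠ i := Finset.ne_of_mem_erase hk
    obtain ⟨ha1, ha2⟩ := Gset_off_i hab hmono hBi hb hA hki
    simp only [Function.comp_apply]
    rw [Equiv.swap_apply_of_ne_of_ne ha1 ha2, swapB_off_i hmono hBi hb hki]
  rw [hP]
  have hfi : (X ((⇑(Equiv.swap a b) ∘ A) i) - X (B i) : MvPolynomial (Fin n) ℝ)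
      = X b - X a := by
    simp only [Function.comp_apply]
    rw [hAi, Equiv.swap_apply_left, hBi]
  have hgi : (X (A i) - X ((⇑(Equiv.swap a b) ∘ B) i) : MvPolynomial (Fin n) ℝ)
      = X a - X b := by
    simp only [Function.comp_apply]
    rw [hAi, swapB_at_i hBi]
  rw [hfi, hgi]
  ring

open Classical in
lemma E1 (hab : (b:ℕ) = a + 1) (hmono : StrictMono B) (hBi : B i = a)
    (hb : ∀ j, B j ≠ b) :
    rename (⇑(Equiv.swap a b)) (chiB B)
      = chiB (⇑(Equiv.swap a b) ∘ B) - ∑ A ∈ Gset B a b i, chiAB A (⇑(Equiv.swap a b) ∘ B) := by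
  rw [rename_chiB]
  have key : ∑ A ∈ Adm B, chiAB (⇑(Equiv.swap a b) ∘ A) (⇑(Equiv.swap a b) ∘ B)
      = ∑ A ∈ (Adm (⇑(Equiv.swap a b) ∘ B)).filter (fun A => ¬ A i = a),
          chiAB A (⇑(Equiv.swap a b) ∘ B) := by
    refine Finset.sum_nbij' (fun A => ⇑(Equiv.swap a b) ∘ A) (fun A => ⇑(Equiv.swap a b) ∘ A)
      ?_ ?_ (fun A _ => swap_comp_swap_comp a b A) (fun A _ => swap_comp_swap_comp a b A)
      (fun A _ => rfl)
    · intro A hA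
      rw [Finset.mem_filter]
      exact ⟨L1 hab hmono hBi hb hA, L1' hab hBi hA⟩
    · intro A hA
      rw [Finset.mem_filter] at hA
      exact L2 hab hmono hBi hb hA.1 hA.2
  rw [key, chiB_eq]
  rw [← Finset.sum_filter_add_sum_filter_not (Adm (⇑(Equiv.swap a b) ∘ B)) (fun A => A i = a)]
  rw [Gset]
  ring

open Classical in
lemma E2 (hab : (b:ℕ) = a + 1) (hmono : StrictMono B) (hBi : B i = a)
    (hb : ∀ j, B j ≠ b) :
    rename (⇑(Equiv.swap a b)) (chiB (⇑(Equiv.swap a b) ∘ B))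
      = chiB B - ∑ A ∈ Gset B a b i, chiAB A (⇑(Equiv.swap a b) ∘ B) := by
  rw [rename_chiB]
  have hσB' : ⇑(Equiv.swap a b) ∘ (⇑(Equiv.swap a b) ∘ B) = B := swap_comp_swap_comp a b B
  rw [hσB']
  rw [← Finset.sum_filter_add_sum_filter_not (Adm (⇑(Equiv.swap a b) ∘ B))
    (fun A => A i = a) (fun A => chiAB (⇑(Equiv.swap a b) ∘ A) B)]
  have e1 : ∑ A ∈ (Adm (⇑(Equiv.swap a b) ∘ B)).filter (fun A => A i = a),
      chiAB (⇑(Equiv.swap a b) ∘ A) B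
      = - ∑ A ∈ Gset B a b i, chiAB A (⇑(Equiv.swap a b) ∘ B) := by
    rw [Gset, ← Finset.sum_neg_distrib]
    refine Finset.sum_congr rfl fun A hA => ?_
    exact L3 hab hmono hBi hb (by rw [Gset]; exact hA)
  have e2 : ∑ A ∈ (Adm (⇑(Equiv.swap a b) ∘ B)).filter (fun A => ¬ A i = a),
      chiAB (⇑(Equiv.swap a b) ∘ A) B = chiB B := by
    rw [chiB_eq]
    refine Finset.sum_nbij' (fun A => ⇑(Equiv.swap a b) ∘ A) (fun A => ⇑(Equiv.swap a b) ∘ A)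
      ?_ ?_ (fun A _ => swap_comp_swap_comp a b A) (fun A _ => swap_comp_swap_comp a b A)
      (fun A _ => rfl)
    · intro A hA
      rw [Finset.mem_filter] at hA
      exact L2 hab hmono hBi hb hA.1 hA.2
    · intro A hA
      rw [Finset.mem_filter]
      exact ⟨L1 hab hmono hBi hb hA, L1' hab hBi hA⟩
  rw [e1, e2]
  ring

end EL

section E3sec
variable {n d : ℕ} {B : Fin d → Fin n} {a b : Fin n} {i : Fin d}

noncomputable def Pe (B : Fin d → Fin n) (i : Fin d) (A : Fin d → Fin n) :
    MvPolynomial (Fin n) ℝ :=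
  ∏ k ∈ Finset.univ.erase i, (X (A k) - X (B k))

lemma Pe_congr {A A' : Fin d → Fin n} (h : ∀ k, k ≠ i → A k = A' k) :
    Pe B i A = Pe B i A' :=
  Finset.prod_congr rfl fun k hk => by rw [h k (Finset.ne_of_mem_erase hk)]

lemma D1 (hmono : StrictMono B) (hBi : B i = a) (hb : ∀ j, B j ≠ b)
    (A : Fin d → Fin n) :
    chiAB A (⇑(Equiv.swap a b) ∘ B) = (X (A i) - X b) * Pe B i A := by
  unfold chiAB Pe
  rw [← Finset.mul_prod_erase _ _ (Finset.mem_univ i)]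
  congr 1
  · simp only [Function.comp_apply]
    rw [swapB_at_i hBi]
  · refine Finset.prod_congr rfl fun k hk => ?_
    simp only [Function.comp_apply]
    rw [swapB_off_i hmono hBi hb (Finset.ne_of_mem_erase hk)]

lemma D2 (hBi : B i = a) (A : Fin d → Fin n) :
    chiAB A B = (X (A i) - X a) * Pe B i A := by
  unfold chiAB Pe
  rw [← Finset.mul_prod_erase _ _ (Finset.mem_univ i), hBi]

lemma a_ge (hB : IsTopSet B) (hBi : B i = a) : 2 * (i : ℕ) ≤ (a : ℕ) := by
  obtain ⟨hmono, A₀, h1, h2, h3⟩ := hB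
  classical
  have hsub : (Finset.Iio i).image A₀ ∪ (Finset.Iio i).image B ⊆ Finset.Iio a := by
    intro v hv
    rw [Finset.mem_union] at hv
    rw [Finset.mem_Iio]
    rcases hv with hv | hv <;> rw [Finset.mem_image] at hv <;>
      obtain ⟨k, hk, rfl⟩ := hv <;> rw [Finset.mem_Iio] at hk
    · calc A₀ k < B k := h3 k
        _ < B i := hmono hk
        _ = a := hBi
    · rw [← hBi]; exact hmono hk
  have hdisj : Disjoint ((Finset.Iio i).image A₀) ((Finset.Iio i).image B) := by
    rw [Finset.disjoint_left]
    intro v hv1 hv2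
    rw [Finset.mem_image] at hv1 hv2
    obtain ⟨k, _, rfl⟩ := hv1
    obtain ⟨l, _, hl⟩ := hv2
    exact h2 k l hl.symm
  have hcard := Finset.card_le_card hsub
  rw [Finset.card_union_of_disjoint hdisj, Finset.card_image_of_injective _ h1,
    Finset.card_image_of_injective _ hmono.injective, Fin.card_Iio, Fin.card_Iio] at hcard
  omega

open Classical in
lemma F0_eq (hab : (b:ℕ) = a + 1) (hmono : StrictMono B) (hBi : B i = a)
    (hb : ∀ j, B j ≠ b) :
    (Adm (⇑(Equiv.swap a b) ∘ B)).filter (fun A => ∀ k, A k ≠ a)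
      = (Adm B).filter (fun A => ∀ k, A k ≠ b) := by
  ext A
  rw [Finset.mem_filter, Finset.mem_filter]
  constructor
  · rintro ⟨hA, hAa⟩
    have hAb : ∀ k, A k ≠ b := fun k h =>
      (mem_Adm.mp hA).2.1 k i (by rw [h]; simp only [Function.comp_apply]; rw [swapB_at_i hBi])
    have hfix : ⇑(Equiv.swap a b) ∘ A = A := funext fun k =>
      Equiv.swap_apply_of_ne_of_ne (hAa k) (hAb k)
    have := L2 hab hmono hBi hb hA (hAa i)
    rw [hfix] at this
    exact ⟨this, hAb⟩
  · rintro ⟨hA, hAb⟩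
    have hAa : ∀ k, A k ≠ a := fun k h => (mem_Adm.mp hA).2.1 k i (h.trans hBi.symm)
    have hfix : ⇑(Equiv.swap a b) ∘ A = A := funext fun k =>
      Equiv.swap_apply_of_ne_of_ne (hAa k) (hAb k)
    have := L1 hab hmono hBi hb hA
    rw [hfix] at this
    exact ⟨this, hAa⟩

end E3sec

section Bij
variable {n d : ℕ} {B : Fin d → Fin n} {a b : Fin n} {i : Fin d}

open Classical in
noncomputable def VP (B : Fin d → Fin n) (a b : Fin n) (i : Fin d) :
    Finset ((Fin d → Fin n) × Fin n) :=
  (Gset B a b i ×ˢ Finset.univ).filter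
    (fun p => (p.2 : ℕ) < (a : ℕ) ∧ (∀ l, B l ≠ p.2) ∧ ∀ k, k ≠ i → p.1 k ≠ p.2)

open Classical in
noncomputable def JP (B : Fin d → Fin n) (a b : Fin n) (i : Fin d) :
    Finset ((Fin d → Fin n) × Fin d) :=
  (Gset B a b i ×ˢ Finset.univ).filter
    (fun p => i < p.2 ∧ ((p.1 p.2 : ℕ) < (a : ℕ)))

open Classical in
lemma mem_VP {p : (Fin d → Fin n) × Fin n} :
    p ∈ VP B a b i ↔ p.1 ∈ Gset B a b i ∧ (p.2 : ℕ) < (a : ℕ) ∧ (∀ l, B l ≠ p.2) ∧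
      ∀ k, k ≠ i → p.1 k ≠ p.2 := by
  simp [VP, Finset.mem_filter, Finset.mem_product, and_assoc]

open Classical in
lemma mem_JP {p : (Fin d → Fin n) × Fin d} :
    p ∈ JP B a b i ↔ p.1 ∈ Gset B a b i ∧ i < p.2 ∧ ((p.1 p.2 : ℕ) < (a : ℕ)) := by
  simp [JP, Finset.mem_filter, Finset.mem_product, and_assoc]

/-- facts about members of Gset -/
lemma Gset_facts (hab : (b:ℕ) = a + 1) (hmono : StrictMono B) (hBi : B i = a)
    (hb : ∀ j, B j ≠ b) {A : Fin d → Fin n} (hA : A ∈ Gset B a b i) :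
    Function.Injective A ∧ A i = a ∧ (∀ k l, k ≠ i → A k ≠ B l) ∧
      (∀ k, k ≠ i → A k < B k) := by
  obtain ⟨hAdm, hAi⟩ := mem_Gset.mp hA
  obtain ⟨h1, h2, h3⟩ := mem_Adm.mp hAdm
  refine ⟨h1, hAi, ?_, ?_⟩
  · intro k l hk h
    rcases eq_or_ne l i with rfl | hl
    · exact (Gset_off_i hab hmono hBi hb hA hk).1 (h.trans hBi)
    · refine h2 k l ?_
      rw [h]
      simp only [Function.comp_apply]
      rw [swapB_off_i hmono hBi hb hl]
  · intro k hk
    have := h3 k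
    simp only [Function.comp_apply] at this
    rwa [swapB_off_i hmono hBi hb hk] at this

end Bij


section Bij2
variable {n d : ℕ} {B : Fin d → Fin n} {a b : Fin n} {i : Fin d}

open Classical in
lemma H1 (hab : (b:ℕ) = a + 1) (hmono : StrictMono B) (hBi : B i = a)
    (hb : ∀ j, B j ≠ b) :
    ∑ A ∈ (Adm B).filter (fun A => ∀ k, A k ≠ b), Pe B i A
      = ∑ p ∈ VP B a b i, Pe B i p.1 := by
  refine (Finset.sum_bij (fun p _ => Function.update p.1 i p.2) ?_ ?_ ?_ ?_).symm
  · -- membership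
    rintro ⟨A, v⟩ hp
    obtain ⟨hG, hv1, hv2, hv3⟩ := mem_VP.mp hp
    dsimp only at hv1 hv2 hv3 ⊢
    obtain ⟨h1, h2, h3, h4⟩ := Gset_facts hab hmono hBi hb hG
    rw [Finset.mem_filter, mem_Adm]
    refine ⟨⟨?_, ?_, ?_⟩, ?_⟩
    · intro k l h
      by_cases hk : k = i <;> by_cases hl : l = i
      · rw [hk, hl]
      · subst hk
        rw [Function.update_self, Function.update_of_ne hl] at h
        exact absurd h.symm (hv3 l hl)
      · subst hl
        rw [Function.update_self, Function.update_of_ne hk] at h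
        exact absurd h (hv3 k hk)
      · rw [Function.update_of_ne hk, Function.update_of_ne hl] at h
        exact h1 h
    · intro k l
      by_cases hk : k = i
      · subst hk
        rw [Function.update_self]
        exact fun h => hv2 l h.symm
      · rw [Function.update_of_ne hk]
        exact h3 k l hk
    · intro k
      by_cases hk : k = i
      · subst hk
        rw [Function.update_self, hBi, Fin.lt_def]
        exact hv1
      · rw [Function.update_of_ne hk]
        exact h4 k hk
    · intro k
      by_cases hk : k = i
      · subst hk
        rw [Function.update_self]
        intro h
        have := congrArg Fin.val h
        omega
      · rw [Function.update_of_ne hk]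
        exact (Gset_off_i hab hmono hBi hb hG hk).2
  · -- injectivity
    rintro ⟨A, v⟩ hp ⟨A', v'⟩ hp' h
    dsimp only at h
    obtain ⟨hG, -, -, -⟩ := mem_VP.mp hp
    obtain ⟨hG', -, -, -⟩ := mem_VP.mp hp'
    have hv : v = v' := by
      have := congrFun h i
      rwa [Function.update_self, Function.update_self] at this
    have hA : A = A' := by
      funext k
      by_cases hk : k = i
      · subst hk
        have e1 : A k = a := (mem_Gset.mp hG).2
        have e2 : A' k = a := (mem_Gset.mp hG').2
        rw [e1, e2]
      · have := congrFun h k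
        rwa [Function.update_of_ne hk, Function.update_of_ne hk] at this
    rw [hv, hA]
  · -- surjectivity
    intro A' hA'
    rw [Finset.mem_filter, mem_Adm] at hA'
    obtain ⟨⟨h1, h2, h3⟩, h4⟩ := hA'
    have hAi_lt : (A' i : ℕ) < a := by
      have := h3 i; rwa [hBi, Fin.lt_def] at this
    refine ⟨(Function.update A' i a, A' i), ?_, ?_⟩
    · rw [mem_VP]
      dsimp only
      refine ⟨mem_Gset.mpr ⟨mem_Adm.mpr ⟨?_, ?_, ?_⟩, Function.update_self i a A'⟩,
        hAi_lt, fun l h => h2 i l h.symm, ?_⟩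
      · intro k l h
        by_cases hk : k = i <;> by_cases hl : l = i
        · rw [hk, hl]
        · rw [hk, Function.update_self, Function.update_of_ne hl] at h
          exact absurd (h.symm.trans hBi.symm) (h2 l i)
        · rw [hl, Function.update_self, Function.update_of_ne hk] at h
          exact absurd (h.trans hBi.symm) (h2 k i)
        · rw [Function.update_of_ne hk, Function.update_of_ne hl] at h
          exact h1 h
      · intro k l
        simp only [Function.comp_apply]
        by_cases hk : k = i
        · rw [hk, Function.update_self]
          rcases eq_or_ne l i with rfl | hl
          · rw [swapB_at_i hBi]
            intro h
            have := congrArg Fin.val h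
            omega
          · rw [swapB_off_i hmono hBi hb hl]
            intro h
            exact hl (hmono.injective (hBi.trans h)).symm
        · rw [Function.update_of_ne hk]
          rcases eq_or_ne l i with rfl | hl
          · rw [swapB_at_i hBi]
            exact h4 k
          · rw [swapB_off_i hmono hBi hb hl]
            exact h2 k l
      · intro k
        simp only [Function.comp_apply]
        by_cases hk : k = i
        · rw [hk, Function.update_self, swapB_at_i hBi, Fin.lt_def]
          omega
        · rw [Function.update_of_ne hk, swapB_off_i hmono hBi hb hk]
          exact h3 k
      · intro k hk
        rw [Function.update_of_ne hk]
        exact fun h => hk (h1 h)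
    · dsimp only
      funext k
      by_cases hk : k = i
      · subst hk
        rw [Function.update_self]
      · rw [Function.update_of_ne hk, Function.update_of_ne hk]
  · -- terms
    rintro ⟨A, v⟩ hp
    exact Pe_congr fun k hk => (Function.update_of_ne hk _ _).symm

end Bij2

section Bij3
variable {n d : ℕ} {B : Fin d → Fin n} {a b : Fin n} {i : Fin d}

noncomputable def Psi (b : Fin n) (i : Fin d) (p : (Fin d → Fin n) × Fin d) :
    Fin d → Fin n :=
  fun k => if k = i then p.1 p.2 else if k = p.2 then b else p.1 k

lemma Psi_at_i {p : (Fin d → Fin n) × Fin d} : Psi b i p i = p.1 p.2 := by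
  simp [Psi]

lemma Psi_at_j {p : (Fin d → Fin n) × Fin d} (h : p.2 ≠ i) : Psi b i p p.2 = b := by
  simp [Psi, h]

lemma Psi_off {p : (Fin d → Fin n) × Fin d} {k : Fin d} (h1 : k ≠ i) (h2 : k ≠ p.2) :
    Psi b i p k = p.1 k := by
  simp [Psi, h1, h2]

open Classical in
lemma H2a {M : Type*} [AddCommMonoid M] (hab : (b:ℕ) = a + 1) (hmono : StrictMono B)
    (hBi : B i = a) (hb : ∀ j, B j ≠ b) (f : (Fin d → Fin n) → M) :
    ∑ A ∈ (Adm B).filter (fun A => ¬ ∀ k, A k ≠ b), f A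
      = ∑ p ∈ JP B a b i, f (Psi b i p) := by
  refine (Finset.sum_bij (fun p _ => Psi b i p) ?_ ?_ ?_ (fun p _ => rfl)).symm
  · -- membership
    rintro ⟨A, j⟩ hp
    obtain ⟨hG, hij, hja⟩ := mem_JP.mp hp
    dsimp only at hij hja
    have hji : j ≠ i := hij.ne'
    obtain ⟨h1, h2, h3, h4⟩ := Gset_facts hab hmono hBi hb hG
    have hoffab := fun {k} (hk : k ≠ i) => Gset_off_i hab hmono hBi hb hG hk
    have hval : ∀ k, Psi b i (A, j) k = if k = i then A j else if k = j then b else A k := by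
      intro k; rfl
    rw [Finset.mem_filter, mem_Adm]
    have hAjb : A j ≠ b := fun h => by
      have := congrArg Fin.val h; omega
    refine ⟨⟨?_, ?_, ?_⟩, ?_⟩
    · -- injective
      intro k l h
      rw [hval, hval] at h
      by_cases hki : k = i <;> by_cases hli : l = i
      · rw [hki, hli]
      · rw [if_pos hki, if_neg hli] at h
        by_cases hlj : l = j
        · rw [if_pos hlj] at h; exact absurd h hAjb
        · rw [if_neg hlj] at h; exact absurd (h1 h).symm hlj
      · rw [if_neg hki, if_pos hli] at h
        by_cases hkj : k = j
        · rw [if_pos hkj] at h; exact absurd h.symm hAjb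
        · rw [if_neg hkj] at h; exact absurd (h1 h.symm).symm hkj
      · rw [if_neg hki, if_neg hli] at h
        by_cases hkj : k = j <;> by_cases hlj : l = j
        · rw [hkj, hlj]
        · rw [if_pos hkj, if_neg hlj] at h; exact absurd h.symm (hoffab hli).2
        · rw [if_neg hkj, if_pos hlj] at h; exact absurd h (hoffab hki).2
        · rw [if_neg hkj, if_neg hlj] at h; exact h1 h
    · -- disjoint
      intro k l
      rw [hval]
      by_cases hki : k = i
      · rw [if_pos hki]; exact h3 j l hji
      · rw [if_neg hki]
        by_cases hkj : k = j
        · rw [if_pos hkj]; exact fun h => hb l h.symm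
        · rw [if_neg hkj]; exact h3 k l hki
    · -- lt
      intro k
      rw [hval]
      by_cases hki : k = i
      · rw [if_pos hki, hki, hBi, Fin.lt_def]; exact hja
      · rw [if_neg hki]
        by_cases hkj : k = j
        · rw [if_pos hkj, hkj, Fin.lt_def]; exact Bk_gt_b hab hmono hBi hb hij
        · rw [if_neg hkj]; exact h4 k hki
    · -- contains b
      intro h
      exact h j (Psi_at_j hji)
  · -- injectivity of the map
    rintro ⟨A, j⟩ hp ⟨A2, j2⟩ hp2 h
    obtain ⟨hG, hij, hja⟩ := mem_JP.mp hp
    obtain ⟨hG2, hij2, hja2⟩ := mem_JP.mp hp2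
    dsimp only at hij hja hij2 hja2 h
    have hji : j ≠ i := hij.ne'
    have hji2 : j2 ≠ i := hij2.ne'
    have hjj : j = j2 := by
      by_contra hne
      have e1 := congrFun h j
      rw [Psi_at_j hji] at e1
      have e2 : Psi b i (A2, j2) j = A2 j := Psi_off hji hne
      rw [e2] at e1
      exact (Gset_off_i hab hmono hBi hb hG2 hji).2 e1.symm
    have hAA : A = A2 := by
      funext k
      by_cases hki : k = i
      · have e1 : A i = a := (mem_Gset.mp hG).2
        have e2 : A2 i = a := (mem_Gset.mp hG2).2
        rw [hki, e1, e2]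
      · by_cases hkj : k = j
        · have e1 := congrFun h i
          rw [Psi_at_i, Psi_at_i] at e1
          rw [hkj, hjj]
          rw [hjj] at e1
          exact e1
        · have e1 := congrFun h k
          rw [Psi_off hki hkj, Psi_off hki (by rw [← hjj]; exact hkj)] at e1
          exact e1
    rw [Prod.mk.injEq]
    exact ⟨hAA, hjj⟩
  · -- surjectivity
    intro A' hA'
    rw [Finset.mem_filter, mem_Adm] at hA'
    obtain ⟨⟨h1, h2, h3⟩, h4⟩ := hA'
    push_neg at h4
    obtain ⟨j, hj⟩ := h4
    have hbBj : (b : ℕ) < B j := by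
      have := h3 j; rw [Fin.lt_def] at this; rw [← hj]; exact this
    have hij : i < j := by
      rw [← hmono.lt_iff_lt, Fin.lt_def, hBi]
      omega
    have hji : j ≠ i := hij.ne'
    have hA'i_lt : (A' i : ℕ) < a := by
      have := h3 i; rwa [hBi, Fin.lt_def] at this
    set A : Fin d → Fin n := fun k => if k = i then a else if k = j then A' i else A' k
      with hAdef
    have hAi : A i = a := by simp [hAdef]
    have hAj : A j = A' i := by simp [hAdef, hji]
    have hAk : ∀ k, k ≠ i → k ≠ j → A k = A' k := by
      intro k hk1 hk2; simp [hAdef, hk1, hk2]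
    have hBinj : ∀ l, B l = a → l = i := fun l h =>
      hmono.injective (h.trans hBi.symm)
    refine ⟨(A, j), ?_, ?_⟩
    · rw [mem_JP]
      dsimp only
      refine ⟨mem_Gset.mpr ⟨mem_Adm.mpr ⟨?_, ?_, ?_⟩, hAi⟩, hij, by rw [hAj]; exact hA'i_lt⟩
      · -- injective
        intro k l h
        by_cases hki : k = i <;> by_cases hli : l = i
        · rw [hki, hli]
        · rw [hki, hAi] at h
          by_cases hlj : l = j
          · rw [hlj, hAj] at h; omega
          · rw [hAk l hli hlj] at h
            exact absurd (h.symm.trans hBi.symm) (h2 l i)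
        · rw [hli, hAi] at h
          by_cases hkj : k = j
          · rw [hkj, hAj] at h; omega
          · rw [hAk k hki hkj] at h
            exact absurd (h.trans hBi.symm) (h2 k i)
        · by_cases hkj : k = j <;> by_cases hlj : l = j
          · rw [hkj, hlj]
          · rw [hkj, hAj, hAk l hli hlj] at h
            exact absurd (h1 h.symm) hli
          · rw [hlj, hAj, hAk k hki hkj] at h
            exact absurd (h1 h) hki
          · rw [hAk k hki hkj, hAk l hli hlj] at h
            exact h1 h
      · -- disjoint from B'
        intro k l
        simp only [Function.comp_apply]
        by_cases hli : l = i
        · rw [hli, swapB_at_i hBi]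
          by_cases hki : k = i
          · rw [hki, hAi]; intro h; have := congrArg Fin.val h; omega
          · by_cases hkj : k = j
            · rw [hkj, hAj]; intro h; have := congrArg Fin.val h; omega
            · rw [hAk k hki hkj]
              intro h
              exact hkj (h1 (h.trans hj.symm))
        · rw [swapB_off_i hmono hBi hb hli]
          by_cases hki : k = i
          · rw [hki, hAi]; intro h; exact hli (hBinj l h.symm)
          · by_cases hkj : k = j
            · rw [hkj, hAj]; exact h2 i l
            · rw [hAk k hki hkj]; exact h2 k l
      · -- lt
        intro k
        simp only [Function.comp_apply]
        by_cases hki : k = i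
        · rw [hki, hAi, swapB_at_i hBi, Fin.lt_def]; omega
        · rw [swapB_off_i hmono hBi hb hki]
          by_cases hkj : k = j
          · rw [hkj, hAj, Fin.lt_def]
            have : (a : ℕ) < B j := by omega
            omega
          · rw [hAk k hki hkj]; exact h3 k
    · funext k
      by_cases hki : k = i
      · rw [hki, Psi_at_i]
        dsimp only
        rw [hAj]
      · by_cases hkj : k = j
        · rw [hkj]
          have : Psi b i (A, j) j = b := Psi_at_j hji
          rw [this, hj]
        · rw [Psi_off hki hkj]
          dsimp only
          rw [hAk k hki hkj]

end Bij3

section Bij4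
variable {n d : ℕ} {B : Fin d → Fin n} {a b : Fin n} {i : Fin d}

open Classical in
lemma H2b (hab : (b:ℕ) = a + 1) (hmono : StrictMono B) (hBi : B i = a)
    (hb : ∀ j, B j ≠ b) {p : (Fin d → Fin n) × Fin d} (hp : p ∈ JP B a b i) :
    chiAB (⇑(Equiv.swap a b) ∘ Psi b i p) (⇑(Equiv.swap a b) ∘ B)
      - chiAB (Psi b i p) B
      = (X a - X b) * Pe B i p.1 := by
  obtain ⟨A, j⟩ := p
  obtain ⟨hG, hij, hja⟩ := mem_JP.mp hp
  dsimp only at hij hja ⊢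
  have hji : j ≠ i := hij.ne'
  obtain ⟨h1, h2, h3, h4⟩ := Gset_facts hab hmono hBi hb hG
  have hoffab := fun {k} (hk : k ≠ i) => Gset_off_i hab hmono hBi hb hG hk
  have hjmem : j ∈ Finset.univ.erase i :=
    Finset.mem_erase.mpr ⟨hji, Finset.mem_univ j⟩
  have hAja : A j ≠ a := fun h => by have := congrArg Fin.val h; omega
  have hAjb : A j ≠ b := fun h => by have := congrArg Fin.val h; omega
  set Q : MvPolynomial (Fin n) ℝ :=
    ∏ k ∈ (Finset.univ.erase i).erase j, (X (A k) - X (B k)) with hQ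
  have e3 : Pe B i A = (X (A j) - X (B j)) * Q := by
    rw [Pe, ← Finset.mul_prod_erase _ _ hjmem]
  have e1 : chiAB (⇑(Equiv.swap a b) ∘ Psi b i (A, j)) (⇑(Equiv.swap a b) ∘ B)
      = (X (A j) - X b) * ((X a - X (B j)) * Q) := by
    rw [chiAB, ← Finset.mul_prod_erase _ _ (Finset.mem_univ i),
      ← Finset.mul_prod_erase _ _ hjmem]
    congr 1
    · simp only [Function.comp_apply]
      rw [Psi_at_i, swapB_at_i hBi]
      dsimp only
      rw [Equiv.swap_apply_of_ne_of_ne hAja hAjb]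
    congr 1
    · simp only [Function.comp_apply]
      rw [swapB_off_i hmono hBi hb hji]
      have : Psi b i (A, j) j = b := Psi_at_j hji
      rw [this, Equiv.swap_apply_right]
    · refine Finset.prod_congr rfl fun k hk => ?_
      have hki : k ≠ i := Finset.ne_of_mem_erase (Finset.mem_of_mem_erase hk)
      have hkj : k ≠ j := Finset.ne_of_mem_erase hk
      simp only [Function.comp_apply]
      rw [Psi_off hki hkj, swapB_off_i hmono hBi hb hki]
      dsimp only
      rw [Equiv.swap_apply_of_ne_of_ne (hoffab hki).1 (hoffab hki).2]
  have e2 : chiAB (Psi b i (A, j)) B = (X (A j) - X a) * ((X b - X (B j)) * Q) := by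
    rw [chiAB, ← Finset.mul_prod_erase _ _ (Finset.mem_univ i),
      ← Finset.mul_prod_erase _ _ hjmem]
    congr 1
    · rw [Psi_at_i, hBi]
    congr 1
    · have : Psi b i (A, j) j = b := Psi_at_j hji
      rw [this]
    · refine Finset.prod_congr rfl fun k hk => ?_
      have hki : k ≠ i := Finset.ne_of_mem_erase (Finset.mem_of_mem_erase hk)
      have hkj : k ≠ j := Finset.ne_of_mem_erase hk
      rw [Psi_off hki hkj]
  rw [e1, e2, e3]
  ring

lemma sum_pair {α β M : Type*} [Fintype β] [AddCommMonoid M] (s : Finset α)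
    (pred : α × β → Prop) [DecidablePred pred] (f : α → M) :
    ∑ p ∈ (s ×ˢ Finset.univ).filter pred, f p.1
      = ∑ x ∈ s, (Finset.univ.filter (fun y => pred (x, y))).card • f x := by
  rw [Finset.sum_filter, Finset.sum_product]
  refine Finset.sum_congr rfl fun x _ => ?_
  rw [← Finset.sum_filter]
  exact Finset.sum_const (f x)

open Classical in
lemma H4 (hab : (b:ℕ) = a + 1) (hmono : StrictMono B) (hBi : B i = a)
    (hb : ∀ j, B j ≠ b) :
    ∑ A ∈ ((Adm (⇑(Equiv.swap a b) ∘ B)).filter (fun A => ¬ A i = a)).filter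
        (fun A => ¬ ∀ k, A k ≠ a), chiAB A (⇑(Equiv.swap a b) ∘ B)
      = ∑ A ∈ (Adm B).filter (fun A => ¬ ∀ k, A k ≠ b),
          chiAB (⇑(Equiv.swap a b) ∘ A) (⇑(Equiv.swap a b) ∘ B) := by
  refine (Finset.sum_nbij' (fun A => ⇑(Equiv.swap a b) ∘ A) (fun A => ⇑(Equiv.swap a b) ∘ A)
    ?_ ?_ (fun A _ => swap_comp_swap_comp a b A) (fun A _ => swap_comp_swap_comp a b A)
    ?_).symm
  · intro A hA
    rw [Finset.mem_filter] at hA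
    obtain ⟨hA1, hA2⟩ := hA
    rw [Finset.mem_filter, Finset.mem_filter]
    push_neg at hA2
    obtain ⟨k, hk⟩ := hA2
    refine ⟨⟨L1 hab hmono hBi hb hA1, L1' hab hBi hA1⟩, ?_⟩
    push_neg
    exact ⟨k, by simp only [Function.comp_apply]; rw [hk, Equiv.swap_apply_right]⟩
  · intro A hA
    rw [Finset.mem_filter, Finset.mem_filter] at hA
    obtain ⟨⟨hA1, hA2⟩, hA3⟩ := hA
    rw [Finset.mem_filter]
    push_neg at hA3
    obtain ⟨k, hk⟩ := hA3
    refine ⟨L2 hab hmono hBi hb hA1 hA2, ?_⟩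
    push_neg
    exact ⟨k, by simp only [Function.comp_apply]; rw [hk, Equiv.swap_apply_left]⟩
  · intro A hA
    rfl

end Bij4

section Cnt
variable {n d : ℕ} {B : Fin d → Fin n} {a b : Fin n} {i : Fin d}

open Classical in
lemma CNT (hab : (b:ℕ) = a + 1) (hmono : StrictMono B) (hBi : B i = a)
    (hb : ∀ j, B j ≠ b) {A : Fin d → Fin n} (hA : A ∈ Gset B a b i) :
    (Finset.univ.filter (fun v : Fin n =>
        (v : ℕ) < (a : ℕ) ∧ (∀ l, B l ≠ v) ∧ ∀ k, k ≠ i → A k ≠ v)).card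
      + (Finset.univ.filter (fun j : Fin d => i < j ∧ ((A j : ℕ) < (a : ℕ)))).card
      + 2 * (i : ℕ) = (a : ℕ) := by
  obtain ⟨h1, h2, h3, h4⟩ := Gset_facts hab hmono hBi hb hA
  have hAlt : ∀ k, k < i → (A k : ℕ) < (a : ℕ) := by
    intro k hk
    have e1 : (A k : ℕ) < B k := h4 k hk.ne
    have e2 : (B k : ℕ) < a := Bk_lt_a hmono hBi hk
    omega
  -- split Iio a by membership in range of B
  have t1 := Finset.card_filter_add_card_filter_not
    (s := Finset.Iio a) (p := fun v => ∃ l, B l = v)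
  have t2 := Finset.card_filter_add_card_filter_not
    (s := (Finset.Iio a).filter (fun v => ¬ ∃ l, B l = v))
    (p := fun v => ∃ k, k ≠ i ∧ A k = v)
  have e1 : (Finset.Iio a).filter (fun v => ∃ l, B l = v) = (Finset.Iio i).image B := by
    ext v
    simp only [Finset.mem_filter, Finset.mem_Iio, Finset.mem_image]
    constructor
    · rintro ⟨hv, l, rfl⟩
      exact ⟨l, by rwa [← hmono.lt_iff_lt, hBi], rfl⟩
    · rintro ⟨l, hl, rfl⟩
      exact ⟨by rw [← hBi]; exact hmono hl, l, rfl⟩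
  have e2 : ((Finset.Iio a).filter (fun v => ¬ ∃ l, B l = v)).filter
      (fun v => ∃ k, k ≠ i ∧ A k = v)
      = (Finset.univ.filter (fun k => k ≠ i ∧ (A k : ℕ) < (a : ℕ))).image A := by
    ext v
    simp only [Finset.mem_filter, Finset.mem_Iio, Finset.mem_image, Finset.mem_univ,
      true_and]
    constructor
    · rintro ⟨⟨hv, -⟩, k, hk, rfl⟩
      exact ⟨k, ⟨hk, by rwa [Fin.lt_def] at hv⟩, rfl⟩
    · rintro ⟨k, ⟨hk, hlt⟩, rfl⟩
      exact ⟨⟨by rwa [Fin.lt_def], fun ⟨l, hl⟩ => h3 k l hk hl.symm⟩, k, hk, rfl⟩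
  have e3 : ((Finset.Iio a).filter (fun v => ¬ ∃ l, B l = v)).filter
      (fun v => ¬ ∃ k, k ≠ i ∧ A k = v)
      = Finset.univ.filter (fun v : Fin n =>
          (v : ℕ) < (a : ℕ) ∧ (∀ l, B l ≠ v) ∧ ∀ k, k ≠ i → A k ≠ v) := by
    ext v
    simp only [Finset.mem_filter, Finset.mem_Iio, Finset.mem_univ, true_and,
      not_exists, Fin.lt_def]
    tauto
  -- split K by position relative to i
  have t3 := Finset.card_filter_add_card_filter_not
    (s := Finset.univ.filter (fun k : Fin d => k ≠ i ∧ (A k : ℕ) < (a : ℕ)))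
    (p := fun k => k < i)
  have e4 : (Finset.univ.filter (fun k : Fin d => k ≠ i ∧ (A k : ℕ) < (a : ℕ))).filter
      (fun k => k < i) = Finset.Iio i := by
    ext k
    simp only [Finset.mem_filter, Finset.mem_univ, true_and, Finset.mem_Iio]
    constructor
    · rintro ⟨-, hk⟩; exact hk
    · intro hk; exact ⟨⟨hk.ne, hAlt k hk⟩, hk⟩
  have e5 : (Finset.univ.filter (fun k : Fin d => k ≠ i ∧ (A k : ℕ) < (a : ℕ))).filter
      (fun k => ¬ k < i)
      = Finset.univ.filter (fun j : Fin d => i < j ∧ ((A j : ℕ) < (a : ℕ))) := by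
    ext k
    simp only [Finset.mem_filter, Finset.mem_univ, true_and, not_lt]
    constructor
    · rintro ⟨⟨hne, hlt⟩, hge⟩
      exact ⟨lt_of_le_of_ne hge (Ne.symm hne), hlt⟩
    · rintro ⟨hgt, hlt⟩
      exact ⟨⟨hgt.ne', hlt⟩, hgt.le⟩
  rw [e1, Finset.card_image_of_injective _ hmono.injective, Fin.card_Iio,
    Fin.card_Iio] at t1
  rw [e2, e3, Finset.card_image_of_injective _ h1] at t2
  rw [e4, e5, Fin.card_Iio] at t3
  omega

end Cnt

section E3final
variable {n d : ℕ} {B : Fin d → Fin n} {a b : Fin n} {i : Fin d}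

open Classical in
lemma E3 (hab : (b:ℕ) = a + 1) (hmono : StrictMono B) (hBi : B i = a)
    (hb : ∀ j, B j ≠ b) :
    chiB (⇑(Equiv.swap a b) ∘ B) - chiB B
      = (((a : ℕ) - 2 * (i : ℕ)) : ℕ) •
          (∑ A ∈ Gset B a b i, chiAB A (⇑(Equiv.swap a b) ∘ B))
        + ∑ A ∈ Gset B a b i, chiAB A (⇑(Equiv.swap a b) ∘ B) := by
  have split1 : chiB (⇑(Equiv.swap a b) ∘ B)
      = (∑ A ∈ Gset B a b i, chiAB A (⇑(Equiv.swap a b) ∘ B))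
        + ∑ A ∈ (Adm (⇑(Equiv.swap a b) ∘ B)).filter (fun A => ¬ A i = a),
            chiAB A (⇑(Equiv.swap a b) ∘ B) := by
    rw [chiB_eq]
    unfold Gset
    exact (Finset.sum_filter_add_sum_filter_not _ _ _).symm
  have split2 : ∑ A ∈ (Adm (⇑(Equiv.swap a b) ∘ B)).filter (fun A => ¬ A i = a),
        chiAB A (⇑(Equiv.swap a b) ∘ B)
      = ∑ A ∈ ((Adm (⇑(Equiv.swap a b) ∘ B)).filter (fun A => ¬ A i = a)).filter
            (fun A => ∀ k, A k ≠ a), chiAB A (⇑(Equiv.swap a b) ∘ B)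
        + ∑ A ∈ ((Adm (⇑(Equiv.swap a b) ∘ B)).filter (fun A => ¬ A i = a)).filter
            (fun A => ¬ ∀ k, A k ≠ a), chiAB A (⇑(Equiv.swap a b) ∘ B) :=
    (Finset.sum_filter_add_sum_filter_not _ _ _).symm
  have eF0' : ((Adm (⇑(Equiv.swap a b) ∘ B)).filter (fun A => ¬ A i = a)).filter
        (fun A => ∀ k, A k ≠ a)
      = (Adm B).filter (fun A => ∀ k, A k ≠ b) := by
    rw [← F0_eq hab hmono hBi hb]
    ext A
    simp only [Finset.mem_filter]
    exact ⟨fun h => ⟨h.1.1, h.2⟩, fun h => ⟨⟨h.1, h.2 i⟩, h.2⟩⟩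
  have split3 : chiB B = ∑ A ∈ (Adm B).filter (fun A => ∀ k, A k ≠ b), chiAB A B
      + ∑ A ∈ (Adm B).filter (fun A => ¬ ∀ k, A k ≠ b), chiAB A B := by
    rw [chiB_eq]
    exact (Finset.sum_filter_add_sum_filter_not _ _ _).symm
  have hdiff : chiB (⇑(Equiv.swap a b) ∘ B) - chiB B
      = (∑ A ∈ Gset B a b i, chiAB A (⇑(Equiv.swap a b) ∘ B))
        + (∑ A ∈ (Adm B).filter (fun A => ∀ k, A k ≠ b),
            (chiAB A (⇑(Equiv.swap a b) ∘ B) - chiAB A B))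
        + (∑ A ∈ (Adm B).filter (fun A => ¬ ∀ k, A k ≠ b),
            (chiAB (⇑(Equiv.swap a b) ∘ A) (⇑(Equiv.swap a b) ∘ B) - chiAB A B)) := by
    rw [split1, split2, eF0', H4 hab hmono hBi hb, split3,
      Finset.sum_sub_distrib, Finset.sum_sub_distrib]
    ring
  have hF0 : ∑ A ∈ (Adm B).filter (fun A => ∀ k, A k ≠ b),
        (chiAB A (⇑(Equiv.swap a b) ∘ B) - chiAB A B)
      = (X a - X b) * ∑ A ∈ (Adm B).filter (fun A => ∀ k, A k ≠ b), Pe B i A := by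
    rw [Finset.mul_sum]
    refine Finset.sum_congr rfl fun A _ => ?_
    rw [D1 hmono hBi hb A, D2 hBi A]
    ring
  have hFb : ∑ A ∈ (Adm B).filter (fun A => ¬ ∀ k, A k ≠ b),
        (chiAB (⇑(Equiv.swap a b) ∘ A) (⇑(Equiv.swap a b) ∘ B) - chiAB A B)
      = (X a - X b) * ∑ p ∈ JP B a b i, Pe B i p.1 := by
    rw [H2a hab hmono hBi hb
      (fun A => chiAB (⇑(Equiv.swap a b) ∘ A) (⇑(Equiv.swap a b) ∘ B) - chiAB A B),
      Finset.mul_sum]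
    exact Finset.sum_congr rfl fun p hp => H2b hab hmono hBi hb hp
  have hS : ∑ A ∈ Gset B a b i, chiAB A (⇑(Equiv.swap a b) ∘ B)
      = (X a - X b) * ∑ A ∈ Gset B a b i, Pe B i A := by
    rw [Finset.mul_sum]
    refine Finset.sum_congr rfl fun A hA => ?_
    rw [D1 hmono hBi hb A, (mem_Gset.mp hA).2]
  have hVsum : ∑ p ∈ VP B a b i, Pe B i p.1
      = ∑ A ∈ Gset B a b i, (Finset.univ.filter (fun v : Fin n =>
          (v : ℕ) < (a : ℕ) ∧ (∀ l, B l ≠ v) ∧ ∀ k, k ≠ i → A k ≠ v)).card • Pe B i A := by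
    unfold VP
    exact sum_pair _ _ _
  have hJsum : ∑ p ∈ JP B a b i, Pe B i p.1
      = ∑ A ∈ Gset B a b i, (Finset.univ.filter (fun j : Fin d =>
          i < j ∧ ((A j : ℕ) < (a : ℕ)))).card • Pe B i A := by
    unfold JP
    exact sum_pair _ _ _
  have hcomb : ∑ p ∈ VP B a b i, Pe B i p.1 + ∑ p ∈ JP B a b i, Pe B i p.1
      = (((a : ℕ) - 2 * (i : ℕ)) : ℕ) • ∑ A ∈ Gset B a b i, Pe B i A := by
    rw [hVsum, hJsum, Finset.smul_sum, ← Finset.sum_add_distrib]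
    refine Finset.sum_congr rfl fun A hA => ?_
    rw [← add_smul]
    congr 1
    have := CNT hab hmono hBi hb hA
    omega
  rw [hdiff, hF0, H1 hab hmono hBi hb, hFb, hS]
  rw [add_assoc, ← mul_add, hcomb, mul_smul_comm]
  abel

end E3final


/-- Action of the transposition `π = (m, m+1)` on `χ_B` (0-based: `a` is the variable `m`
and `b` the variable `m+1`, so the paper's 1-based `m` is `(a : ℕ) + 1`; likewise, if
`B i = a`, the paper's 1-based index is `(i : ℕ) + 1`, so the paper's `m - 2i` is
`(a : ℕ) + 1 - 2(i : ℕ)`):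
1. if `m, m+1 ∉ B` or `m, m+1 ∈ B` then `χ_B^π = χ_B`;
2. if `B i = m`, `m+1 ∉ B`, and `B^π = (swap m (m+1)) ∘ B` is a top set, then
   `χ_B^π = (1/(m-2i)) χ_B + ((m-2i-1)/(m-2i)) χ_{B^π}` and
   `χ_{B^π}^π = (-1/(m-2i)) χ_{B^π} + ((m-2i+1)/(m-2i)) χ_B`;
3. if `B i = m`, `m+1 ∉ B`, and `B^π` is not a top set, then `χ_B^π = χ_B`. -/
theorem chiB_transposition {n d : ℕ} (B : Fin d → Fin n) (hB : IsTopSet B)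
    (a b : Fin n) (hab : (b : ℕ) = (a : ℕ) + 1) :
    (((a ∉ Set.range B ∧ b ∉ Set.range B) ∨ (a ∈ Set.range B ∧ b ∈ Set.range B)) →
      MvPolynomial.rename (⇑(Equiv.swap a b)) (chiB B) = chiB B) ∧
    (∀ i : Fin d, B i = a → b ∉ Set.range B →
      ((IsTopSet ((Equiv.swap a b) ∘ B) →
        MvPolynomial.rename (⇑(Equiv.swap a b)) (chiB B)
          = (((a : ℕ) : ℝ) + 1 - 2 * ((i : ℕ) : ℝ))⁻¹ • chiB B
            + (((((a : ℕ) : ℝ) + 1 - 2 * ((i : ℕ) : ℝ)) - 1)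
                / (((a : ℕ) : ℝ) + 1 - 2 * ((i : ℕ) : ℝ))) • chiB ((Equiv.swap a b) ∘ B) ∧
        MvPolynomial.rename (⇑(Equiv.swap a b)) (chiB ((Equiv.swap a b) ∘ B))
          = (-(((a : ℕ) : ℝ) + 1 - 2 * ((i : ℕ) : ℝ))⁻¹) • chiB ((Equiv.swap a b) ∘ B)
            + (((((a : ℕ) : ℝ) + 1 - 2 * ((i : ℕ) : ℝ)) + 1)
                / (((a : ℕ) : ℝ) + 1 - 2 * ((i : ℕ) : ℝ))) • chiB B) ∧
      (¬ IsTopSet ((Equiv.swap a b) ∘ B) →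
        MvPolynomial.rename (⇑(Equiv.swap a b)) (chiB B) = chiB B))) := by
  have hmono := hB.1
  constructor
  · rintro (⟨ha, hbr⟩ | ⟨⟨i, hBi⟩, ⟨j, hBj⟩⟩)
    · exact part1a B a b hab (fun j h => ha ⟨j, h⟩) (fun j h => hbr ⟨j, h⟩)
    · exact part1b B a b hab hBi hBj hmono.injective
  · intro i hBi hbr
    have hb : ∀ j, B j ≠ b := fun j h => hbr ⟨j, h⟩
    have htop : IsTopSet (⇑(Equiv.swap a b) ∘ B) := by
      refine ⟨mono_B' hab hmono hBi hb, ?_⟩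
      obtain ⟨-, A₀, h1, h2, h3⟩ := hB
      have hmem : A₀ ∈ Adm B := mem_Adm.mpr ⟨h1, h2, h3⟩
      have := L1 hab hmono hBi hb hmem
      rw [mem_Adm] at this
      exact ⟨_, this⟩
    refine ⟨fun _ => ⟨?_, ?_⟩, fun h => absurd htop h⟩
    all_goals {
      set S : MvPolynomial (Fin n) ℝ :=
        ∑ A ∈ Gset B a b i, chiAB A (⇑(Equiv.swap a b) ∘ B) with hSdef
      set c : ℝ := ((a : ℕ) : ℝ) + 1 - 2 * ((i : ℕ) : ℝ) with hc
      have hge : 2 * (i : ℕ) ≤ (a : ℕ) := a_ge ⟨hmono, hB.2⟩ hBi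
      have hcm : c = (((a : ℕ) - 2 * (i : ℕ) : ℕ) : ℝ) + 1 := by
        rw [hc, Nat.cast_sub hge]
        push_cast
        ring
      have hc0 : c ≠ 0 := by
        rw [hcm]
        positivity
      have hE3 : chiB (⇑(Equiv.swap a b) ∘ B) - chiB B = c • S := by
        rw [hcm, add_smul, one_smul, Nat.cast_smul_eq_nsmul]
        exact E3 hab hmono hBi hb
      have hS : S = c⁻¹ • (chiB (⇑(Equiv.swap a b) ∘ B) - chiB B) := by
        rw [hE3, smul_smul, inv_mul_cancel₀ hc0, one_smul]
      first
      | (rw [E1 hab hmono hBi hb (i := i), ← hSdef, hS]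
         have hcc : ((c - 1) / c : ℝ) = 1 - c⁻¹ := by field_simp
         rw [hcc, sub_smul, one_smul, smul_sub]
         abel)
      | (rw [E2 hab hmono hBi hb (i := i), ← hSdef, hS]
         have hcc : ((c + 1) / c : ℝ) = 1 + c⁻¹ := by field_simp
         rw [hcc, add_smul, one_smul, smul_sub, neg_smul]
         abel)
    }
end

section
/- Let μ be a permutation-invariant probability measure on ℝⁿ with respect to which all polynomials are integrable, and let f be a harmonic multilinear polynomial in x₁,…,xₙ of degree at most d. Then Var_μ[f] ≤ Inf[f] ≤ d · Var_μ[f], where Var_μ[f] = E_μ[f²] − (E_μ[f])². -/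
open MvPolynomial MeasureTheory Finset
set_option linter.unusedSectionVars false
set_option linter.unnecessarySimpa false


/-- A harmonic polynomial: the sum of all partial derivatives vanishes. -/
def IsHarmonic {n : ℕ} (P : MvPolynomial (Fin n) ℝ) : Prop :=
  ∑ i, MvPolynomial.pderiv i P = 0

namespace PoincareAux

variable {n : ℕ}

/-- indicator finsupp of a finset -/
noncomputable def ind (S : Finset (Fin n)) : Fin n →₀ ℕ :=
  ∑ i ∈ S, Finsupp.single i 1

lemma ind_apply (S : Finset (Fin n)) (x : Fin n) :
    ind S x = if x ∈ S then 1 else 0 := by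
  classical
  unfold ind
  rw [Finset.sum_apply']
  by_cases hx : x ∈ S
  · rw [Finset.sum_eq_single (f := fun k => (Finsupp.single k 1 : Fin n →₀ ℕ) x) x
      (fun b _ hb => by simp [Finsupp.single_apply, hb]) (by tauto)]
    simp [hx]
  · rw [Finset.sum_eq_zero, if_neg hx]
    intro b hb
    exact Finsupp.single_eq_of_ne (by rintro rfl; exact hx hb)

lemma ind_support (S : Finset (Fin n)) : (ind S).support = S := by
  ext x; simp [Finsupp.mem_support_iff, ind_apply]

lemma ind_degree (S : Finset (Fin n)) : (ind S).degree = S.card := by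
  rw [Finsupp.degree_apply, ind_support]
  rw [Finset.card_eq_sum_ones]
  exact Finset.sum_congr rfl fun x hx => by simp [ind_apply, hx]

lemma ind_injective : Function.Injective (ind (n := n)) := by
  intro S T h
  rw [← ind_support S, ← ind_support T, h]

lemma eq_ind {m : Fin n →₀ ℕ} (hm : ∀ i, m i ≤ 1) : m = ind m.support := by
  ext x
  rw [ind_apply]
  by_cases hx : x ∈ m.support
  · rw [if_pos hx]
    have h1 := Finsupp.mem_support_iff.mp hx
    have h2 := hm x
    omega
  · rw [if_neg hx]
    exact Finsupp.notMem_support_iff.mp hx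

lemma ind_empty : ind (∅ : Finset (Fin n)) = 0 := by
  unfold ind; simp

lemma ind_insert {S : Finset (Fin n)} {b : Fin n} (hb : b ∉ S) :
    ind (insert b S) = ind S + Finsupp.single b 1 := by
  unfold ind
  rw [Finset.sum_insert hb, add_comm]

set_option linter.unusedSectionVars false
set_option linter.unnecessarySimpa false
open MvPolynomial MeasureTheory Finset

lemma measurable_eval (P : MvPolynomial (Fin n) ℝ) :
    Measurable fun x : Fin n → ℝ => eval x P := by
  induction P using MvPolynomial.induction_on with
  | C a => simpa using measurable_const
  | add p q hp hq => simp only [map_add]; exact hp.add hq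
  | mul_X p i hp => simp only [map_mul, eval_X]; exact hp.mul (measurable_pi_apply i)

variable (μ : Measure (Fin n → ℝ)) [IsProbabilityMeasure μ]

/-- expectation of a polynomial -/
noncomputable def Ev (P : MvPolynomial (Fin n) ℝ) : ℝ := ∫ x, eval x P ∂μ

variable {μ}

section Ev
variable (hint : ∀ P : MvPolynomial (Fin n) ℝ, Integrable (fun x => eval x P) μ)

include hint in
lemma Ev_add (P Q : MvPolynomial (Fin n) ℝ) : Ev μ (P + Q) = Ev μ P + Ev μ Q := by
  unfold Ev
  simp only [map_add]
  exact integral_add (hint P) (hint Q)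

include hint in
lemma Ev_sub (P Q : MvPolynomial (Fin n) ℝ) : Ev μ (P - Q) = Ev μ P - Ev μ Q := by
  unfold Ev
  simp only [map_sub]
  exact integral_sub (hint P) (hint Q)

lemma Ev_smul (c : ℝ) (P : MvPolynomial (Fin n) ℝ) : Ev μ (c • P) = c * Ev μ P := by
  unfold Ev
  simp only [smul_eval]
  rw [integral_const_mul]

include hint in
lemma Ev_sum {α : Type*} (s : Finset α) (P : α → MvPolynomial (Fin n) ℝ) :
    Ev μ (∑ a ∈ s, P a) = ∑ a ∈ s, Ev μ (P a) := by
  unfold Ev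
  simp only [map_sum]
  exact integral_finset_sum s fun a _ => hint (P a)

lemma Ev_C (c : ℝ) : Ev μ (C c) = c := by
  unfold Ev
  simp [integral_const]

lemma Ev_sq_nonneg (P : MvPolynomial (Fin n) ℝ) : 0 ≤ Ev μ (P * P) := by
  unfold Ev
  simp only [map_mul]
  exact integral_nonneg fun x => mul_self_nonneg _

lemma Ev_zero : Ev μ (0 : MvPolynomial (Fin n) ℝ) = 0 := by
  unfold Ev; simp

lemma Ev_rename (hinv : ∀ π : Equiv.Perm (Fin n), Measure.map (fun x => x ∘ π) μ = μ)
    (π : Equiv.Perm (Fin n)) (P : MvPolynomial (Fin n) ℝ) :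
    Ev μ (rename (⇑π) P) = Ev μ P := by
  unfold Ev
  have hmeas : Measurable fun x : Fin n → ℝ => x ∘ π :=
    measurable_pi_lambda _ fun i => measurable_pi_apply (π i)
  calc ∫ x, eval x (rename (⇑π) P) ∂μ = ∫ x, eval (x ∘ π) P ∂μ := by
        simp only [eval_rename]
    _ = ∫ y, eval y P ∂(Measure.map (fun x => x ∘ π) μ) := by
        rw [integral_map hmeas.aemeasurable ((measurable_eval P).aestronglyMeasurable)]
    _ = ∫ y, eval y P ∂μ := by rw [hinv π]

end Ev
set_option linter.unusedSectionVars false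

lemma card_sub_aux (A B : Finset (Fin n)) :
    Fintype.card {y : {x : Fin n // x ∈ A} // (y : Fin n) ∈ B} = (A ∩ B).card := by
  classical
  rw [Fintype.card_congr (Equiv.subtypeSubtypeEquivSubtypeInter _ _)]
  rw [Fintype.card_subtype]
  congr 1
  ext x
  simp [Finset.mem_inter]

lemma card_sub_aux' (A B : Finset (Fin n)) :
    Fintype.card {y : {x : Fin n // ¬ x ∈ A} // (y : Fin n) ∈ B} = (B \ A).card := by
  classical
  rw [Fintype.card_congr (Equiv.subtypeSubtypeEquivSubtypeInter _ _)]
  rw [Fintype.card_subtype]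
  congr 1
  ext x
  simp only [Finset.mem_filter, Finset.mem_univ, true_and, Finset.mem_sdiff]
  tauto

lemma exists_perm (S S' T : Finset (Fin n)) (h1 : S.card = S'.card)
    (h2 : (S ∩ T).card = (S' ∩ T).card) :
    ∃ π : Equiv.Perm (Fin n), (∀ x, x ∈ T ↔ π x ∈ T) ∧ (∀ x, x ∈ S ↔ π x ∈ S') := by
  classical
  have hc1 : Fintype.card {y : {x : Fin n // x ∈ T} // (y : Fin n) ∈ S}
      = Fintype.card {y : {x : Fin n // x ∈ T} // (y : Fin n) ∈ S'} := by
    rw [card_sub_aux, card_sub_aux, Finset.inter_comm T S, Finset.inter_comm T S', h2]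
  have hsd : (S \ T).card = (S' \ T).card := by
    have a1 := Finset.card_inter_add_card_sdiff S T
    have a2 := Finset.card_inter_add_card_sdiff S' T
    omega
  have hc2 : Fintype.card {y : {x : Fin n // ¬ x ∈ T} // (y : Fin n) ∈ S}
      = Fintype.card {y : {x : Fin n // ¬ x ∈ T} // (y : Fin n) ∈ S'} := by
    rw [card_sub_aux', card_sub_aux', hsd]
  let e1 := Fintype.equivOfCardEq hc1
  let e2 := Fintype.equivOfCardEq hc2
  let ep : Equiv.Perm {x : Fin n // x ∈ T} := e1.extendSubtype
  let en : Equiv.Perm {x : Fin n // ¬ x ∈ T} := e2.extendSubtype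
  refine ⟨Equiv.Perm.subtypeCongr ep en, fun x => ?_, fun x => ?_⟩
  · by_cases hx : x ∈ T
    · simp only [Equiv.Perm.subtypeCongr.left_apply ep en hx]
      exact ⟨fun _ => (ep ⟨x, hx⟩).2, fun _ => hx⟩
    · simp only [Equiv.Perm.subtypeCongr.right_apply ep en hx]
      exact ⟨fun h => absurd h hx, fun h => absurd ((en ⟨x, hx⟩).2 h) id⟩
  · by_cases hx : x ∈ T
    · rw [Equiv.Perm.subtypeCongr.left_apply ep en hx]
      by_cases hxs : x ∈ S
      · exact ⟨fun _ => e1.extendSubtype_mem ⟨x, hx⟩ hxs, fun _ => hxs⟩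
      · exact ⟨fun h => absurd h hxs, fun h => absurd h (e1.extendSubtype_not_mem ⟨x, hx⟩ hxs)⟩
    · rw [Equiv.Perm.subtypeCongr.right_apply ep en hx]
      by_cases hxs : x ∈ S
      · exact ⟨fun _ => e2.extendSubtype_mem ⟨x, hx⟩ hxs, fun _ => hxs⟩
      · exact ⟨fun h => absurd h hxs, fun h => absurd h (e2.extendSubtype_not_mem ⟨x, hx⟩ hxs)⟩

lemma mapDomain_eq_of_perm {S S' T : Finset (Fin n)} {π : Equiv.Perm (Fin n)}
    (hT : ∀ x, x ∈ T ↔ π x ∈ T) (hS : ∀ x, x ∈ S ↔ π x ∈ S') :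
    Finsupp.mapDomain ⇑π (ind S + ind T) = ind S' + ind T := by
  ext y
  obtain ⟨x, rfl⟩ : ∃ x, π x = y := ⟨π.symm y, by simp⟩
  rw [Finsupp.mapDomain_apply π.injective]
  simp only [Finsupp.add_apply, ind_apply]
  rw [if_congr (hS x) rfl rfl, if_congr (hT x) rfl rfl]

variable {μ : Measure (Fin n → ℝ)} [IsProbabilityMeasure μ]

lemma moment_eq (hinv : ∀ π : Equiv.Perm (Fin n), Measure.map (fun x => x ∘ π) μ = μ)
    (S S' T : Finset (Fin n)) (h1 : S.card = S'.card)
    (h2 : (S ∩ T).card = (S' ∩ T).card) :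
    Ev μ (monomial (ind S + ind T) (1:ℝ)) = Ev μ (monomial (ind S' + ind T) 1) := by
  obtain ⟨π, hT, hS⟩ := exists_perm S S' T h1 h2
  have hr : rename ⇑π (monomial (ind S + ind T) (1:ℝ)) = monomial (ind S' + ind T) 1 := by
    rw [rename_monomial, mapDomain_eq_of_perm hT hS]
  rw [← hr, Ev_rename hinv]

lemma coeff_pderiv (i : Fin n) (p : MvPolynomial (Fin n) ℝ) (m : Fin n →₀ ℕ) :
    coeff m (pderiv i p) = ((m i : ℝ) + 1) * coeff (m + Finsupp.single i 1) p := by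
  induction p using MvPolynomial.induction_on' with
  | monomial s a =>
    rw [pderiv_monomial, coeff_monomial, coeff_monomial]
    by_cases h : s = m + Finsupp.single i 1
    · subst h
      rw [if_pos (add_tsub_cancel_right _ _), if_pos rfl]
      simp only [Finsupp.add_apply, Finsupp.single_eq_same]
      push_cast
      ring
    · rw [if_neg h, mul_zero]
      by_cases h2 : s - Finsupp.single i 1 = m
      · rw [if_pos h2]
        have hsi : s i = 0 := by
          by_contra hne
          apply h
          rw [← h2]
          ext a
          simp only [Finsupp.add_apply, Finsupp.tsub_apply, Finsupp.single_apply]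
          by_cases hia : i = a
          · subst hia
            simp only [eq_self_iff_true, if_true]
            omega
          · simp [hia]
        simp [hsi]
      · rw [if_neg h2]
  | add p q hp hq =>
    simp only [map_add, coeff_add, hp, hq]
    ring

lemma harm_coeff {f : MvPolynomial (Fin n) ℝ} (hh : IsHarmonic f) (m : Fin n →₀ ℕ) :
    ∑ i, ((m i : ℝ) + 1) * coeff (m + Finsupp.single i 1) f = 0 := by
  have h := congrArg (coeff m) hh
  rw [MvPolynomial.coeff_sum] at h
  simp only [coeff_pderiv] at h
  simpa using h

lemma coeff_eq_zero_of_not_ml {f : MvPolynomial (Fin n) ℝ} (hml : IsMultilinear f)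
    {m : Fin n →₀ ℕ} {i : Fin n} (h2 : 2 ≤ m i) : coeff m f = 0 := by
  by_contra hne
  have := hml m (MvPolynomial.mem_support_iff.mpr hne) i
  omega

lemma harm_sets {f : MvPolynomial (Fin n) ℝ} (hml : IsMultilinear f) (hh : IsHarmonic f)
    (U : Finset (Fin n)) :
    ∑ b ∈ Uᶜ, coeff (ind U + Finsupp.single b 1) f = 0 := by
  have h := harm_coeff hh (ind U)
  rw [← Finset.sum_add_sum_compl U] at h
  have hz : ∑ i ∈ U, ((ind U i : ℝ) + 1) * coeff (ind U + Finsupp.single i 1) f = 0 := by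
    apply Finset.sum_eq_zero
    intro i hi
    have : coeff (ind U + Finsupp.single i 1) f = 0 := by
      apply coeff_eq_zero_of_not_ml hml (i := i)
      simp [Finsupp.add_apply, ind_apply, hi]
    rw [this, mul_zero]
  rw [hz, zero_add] at h
  calc ∑ b ∈ Uᶜ, coeff (ind U + Finsupp.single b 1) f
      = ∑ b ∈ Uᶜ, ((ind U b : ℝ) + 1) * coeff (ind U + Finsupp.single b 1) f := by
        apply Finset.sum_congr rfl
        intro b hb
        have : ind U b = 0 := by
          rw [ind_apply, if_neg (Finset.mem_compl.mp hb)]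
        rw [this]
        push_cast
        ring
    _ = 0 := h

lemma coeff_rename_swap (i j : Fin n) (f : MvPolynomial (Fin n) ℝ) (m : Fin n →₀ ℕ) :
    coeff m (rename (⇑(Equiv.swap i j)) f)
      = coeff (Finsupp.mapDomain (⇑(Equiv.swap i j)) m) f := by
  have h := coeff_rename_mapDomain (⇑(Equiv.swap i j)) (Equiv.injective _) f
    (Finsupp.mapDomain (⇑(Equiv.swap i j)) m)
  rw [← Finsupp.mapDomain_comp] at h
  have hid : (⇑(Equiv.swap i j)) ∘ (⇑(Equiv.swap i j)) = id := by
    ext x; simp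
  rw [hid, Finsupp.mapDomain_id] at h
  exact h

lemma mapDomain_swap_apply (i j : Fin n) (m : Fin n →₀ ℕ) (x : Fin n) :
    Finsupp.mapDomain (⇑(Equiv.swap i j)) m x = m (Equiv.swap i j x) := by
  conv_lhs => rw [show x = Equiv.swap i j (Equiv.swap i j x) by simp]
  rw [Finsupp.mapDomain_apply (Equiv.injective _)]

lemma mapDomain_swap_eq_self {i j : Fin n} {m : Fin n →₀ ℕ} (h : m i = m j) :
    Finsupp.mapDomain (⇑(Equiv.swap i j)) m = m := by
  ext x
  rw [mapDomain_swap_apply]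
  rcases eq_or_ne x i with rfl | hi
  · rw [Equiv.swap_apply_left]; exact h.symm
  rcases eq_or_ne x j with rfl | hj
  · rw [Equiv.swap_apply_right]; exact h
  · rw [Equiv.swap_apply_of_ne_of_ne hi hj]

lemma mapDomain_swap_ind {S : Finset (Fin n)} {a b : Fin n} (ha : a ∈ S) (hb : b ∉ S) :
    Finsupp.mapDomain (⇑(Equiv.swap a b)) (ind S)
      = ind (S.erase a) + Finsupp.single b 1 := by
  ext x
  rw [mapDomain_swap_apply]
  simp only [Finsupp.add_apply, ind_apply, Finsupp.single_apply]
  rcases eq_or_ne x a with rfl | hxa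
  · rw [Equiv.swap_apply_left]
    have hab : ¬ (b = x) := fun h => hb (h ▸ ha)
    simp [hb, Finset.notMem_erase, hab]
  rcases eq_or_ne x b with rfl | hxb
  · rw [Equiv.swap_apply_right]
    have h1 : x ∉ S.erase a := fun h => hb (Finset.mem_of_mem_erase h)
    simp [ha, h1]
  · rw [Equiv.swap_apply_of_ne_of_ne hxa hxb]
    have hbx : ¬ (b = x) := fun h => hxb h.symm
    simp [Finset.mem_erase, hxa, hbx]

lemma key_inner {f : MvPolynomial (Fin n) ℝ} (hml : IsMultilinear f) (hh : IsHarmonic f)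
    {S : Finset (Fin n)} {a : Fin n} (ha : a ∈ S) :
    ∑ b ∈ Sᶜ, coeff (Finsupp.mapDomain (⇑(Equiv.swap a b)) (ind S)) f
      = -(coeff (ind S) f) := by
  have hrw : ∀ b ∈ Sᶜ, coeff (Finsupp.mapDomain (⇑(Equiv.swap a b)) (ind S)) f
      = coeff (ind (S.erase a) + Finsupp.single b 1) f := fun b hb => by
    rw [mapDomain_swap_ind ha (Finset.mem_compl.mp hb)]
  rw [Finset.sum_congr rfl hrw]
  have hcompl : (S.erase a)ᶜ = insert a Sᶜ := by
    ext x
    simp only [Finset.mem_compl, Finset.mem_erase, Finset.mem_insert]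
    by_cases hxa : x = a <;> simp [hxa]
  have h0 := harm_sets hml hh (S.erase a)
  rw [hcompl, Finset.sum_insert (by simp [ha])] at h0
  have hterm : ind (S.erase a) + Finsupp.single a 1 = ind S := by
    rw [← ind_insert (Finset.notMem_erase a S), Finset.insert_erase ha]
  rw [hterm] at h0
  linarith

lemma coeff_sumSwap {f : MvPolynomial (Fin n) ℝ} (hml : IsMultilinear f) (hh : IsHarmonic f)
    (m : Fin n →₀ ℕ) :
    coeff m (∑ p ∈ Finset.univ.offDiag, (f - rename (⇑(Equiv.swap p.1 p.2)) f)) =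
      2 * (m.support.card : ℝ) * ((n : ℝ) + 1 - m.support.card) * coeff m f := by
  classical
  rw [MvPolynomial.coeff_sum]
  simp only [coeff_sub, coeff_rename_swap]
  by_cases hmml : ∀ i, m i ≤ 1
  swap
  · push_neg at hmml
    obtain ⟨i, hi⟩ := hmml
    have h0 : coeff m f = 0 := coeff_eq_zero_of_not_ml hml hi
    rw [h0, mul_zero]
    apply Finset.sum_eq_zero
    intro p _
    have h1 : coeff (Finsupp.mapDomain (⇑(Equiv.swap p.1 p.2)) m) f = 0 := by
      apply coeff_eq_zero_of_not_ml hml (i := Equiv.swap p.1 p.2 i)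
      rw [mapDomain_swap_apply, Equiv.swap_apply_self]
      omega
    rw [h1, sub_zero]
  · set S := m.support with hS
    have hmind : m = ind S := eq_ind hmml
    set k := S.card with hk
    have hkn : k ≤ n := by
      have := Finset.card_le_univ S
      simpa using this
    -- restrict the sum to "mixed" pairs
    have hrestrict :
        ∑ p ∈ (Finset.univ.offDiag.filter (fun p : Fin n × Fin n => ¬(p.1 ∈ S ↔ p.2 ∈ S))),
            (coeff m f - coeff (Finsupp.mapDomain (⇑(Equiv.swap p.1 p.2)) m) f)
          = ∑ p ∈ Finset.univ.offDiag,
            (coeff m f - coeff (Finsupp.mapDomain (⇑(Equiv.swap p.1 p.2)) m) f) := by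
      apply Finset.sum_filter_of_ne
      intro p _ hne
      by_contra hiff
      apply hne
      have hval : m p.1 = m p.2 := by
        rw [hmind, ind_apply, ind_apply]
        by_cases h1 : p.1 ∈ S
        · rw [if_pos h1, if_pos (hiff.mp h1)]
        · rw [if_neg h1, if_neg (fun h => h1 (hiff.mpr h))]
      rw [mapDomain_swap_eq_self hval, sub_self]
    rw [← hrestrict]
    have hset : Finset.univ.offDiag.filter (fun p : Fin n × Fin n => ¬(p.1 ∈ S ↔ p.2 ∈ S))
        = (S ×ˢ Sᶜ) ∪ (Sᶜ ×ˢ S) := by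
      ext p
      simp only [Finset.mem_filter, Finset.mem_offDiag, Finset.mem_univ, true_and,
        Finset.mem_union, Finset.mem_product, Finset.mem_compl]
      constructor
      · rintro ⟨-, h⟩
        by_cases h1 : p.1 ∈ S <;> by_cases h2 : p.2 ∈ S <;> tauto
      · rintro (⟨h1, h2⟩ | ⟨h1, h2⟩)
        · exact ⟨fun he => h2 (he ▸ h1), by tauto⟩
        · exact ⟨fun he => h1 (he ▸ h2), by tauto⟩
    rw [hset, Finset.sum_union]
    swap
    · rw [Finset.disjoint_left]
      rintro p hp hp'
      rw [Finset.mem_product] at hp hp'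
      exact (Finset.mem_compl.mp hp'.1) hp.1
    have hcompl_card : Sᶜ.card = n - k := by
      rw [Finset.card_compl]
      simp [hk]
    have hsum1 : ∑ p ∈ S ×ˢ Sᶜ,
        (coeff m f - coeff (Finsupp.mapDomain (⇑(Equiv.swap p.1 p.2)) m) f)
        = (k : ℝ) * (((n : ℝ) - k) + 1) * coeff m f := by
      rw [Finset.sum_product]
      have hone : ∀ a ∈ S, ∑ b ∈ Sᶜ,
          (coeff m f - coeff (Finsupp.mapDomain (⇑(Equiv.swap a b)) m) f)
          = (((n : ℝ) - k) + 1) * coeff m f := by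
        intro a ha
        rw [Finset.sum_sub_distrib, Finset.sum_const]
        rw [hmind, key_inner hml hh ha, ← hmind]
        rw [hcompl_card, nsmul_eq_mul]
        have : ((n - k : ℕ) : ℝ) = (n : ℝ) - k := by
          push_cast [hkn]
          ring
        rw [this]
        ring
      rw [Finset.sum_congr rfl hone, Finset.sum_const, nsmul_eq_mul]
      ring
    have hsum2 : ∑ p ∈ Sᶜ ×ˢ S,
        (coeff m f - coeff (Finsupp.mapDomain (⇑(Equiv.swap p.1 p.2)) m) f)
        = (k : ℝ) * (((n : ℝ) - k) + 1) * coeff m f := by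
      rw [Finset.sum_product]
      rw [Finset.sum_comm]
      have hone : ∀ a ∈ S, ∑ b ∈ Sᶜ,
          (coeff m f - coeff (Finsupp.mapDomain (⇑(Equiv.swap b a)) m) f)
          = (((n : ℝ) - k) + 1) * coeff m f := by
        intro a ha
        have hsw : ∀ b, Equiv.swap b a = Equiv.swap a b := fun b => Equiv.swap_comm b a
        simp_rw [hsw]
        rw [Finset.sum_sub_distrib, Finset.sum_const]
        rw [hmind, key_inner hml hh ha, ← hmind]
        rw [hcompl_card, nsmul_eq_mul]
        have : ((n - k : ℕ) : ℝ) = (n : ℝ) - k := by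
          push_cast [hkn]
          ring
        rw [this]
        ring
      rw [Finset.sum_congr rfl hone, Finset.sum_const, nsmul_eq_mul]
      ring
    rw [hsum1, hsum2]
    ring

lemma degree_eq_card {f : MvPolynomial (Fin n) ℝ} (hml : IsMultilinear f)
    {m : Fin n →₀ ℕ} (hm : m ∈ f.support) : m.degree = m.support.card := by
  rw [Finsupp.degree, Finset.card_eq_sum_ones]
  apply Finset.sum_congr rfl
  intro i hi
  have h1 := Finsupp.mem_support_iff.mp hi
  have h2 := hml m hm i
  omega

lemma degree_eq_sum (m : Fin n →₀ ℕ) : (m.sum fun _ e => e) = m.degree := by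
  rw [Finsupp.degree_apply, Finsupp.sum]

lemma sumSwap_eq {f : MvPolynomial (Fin n) ℝ} (hml : IsMultilinear f) (hh : IsHarmonic f)
    {d : ℕ} (hdeg : f.totalDegree ≤ d) :
    ∑ p ∈ Finset.univ.offDiag, (f - rename (⇑(Equiv.swap p.1 p.2)) f)
      = ∑ k ∈ Finset.range (d+1),
          (2 * (k:ℝ) * ((n:ℝ) + 1 - k)) • homogeneousComponent k f := by
  apply MvPolynomial.ext
  intro m
  rw [coeff_sumSwap hml hh, MvPolynomial.coeff_sum]
  simp only [coeff_smul, coeff_homogeneousComponent, smul_eq_mul]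
  by_cases hc : coeff m f = 0
  · rw [hc, mul_zero]
    symm
    apply Finset.sum_eq_zero
    intro k _
    split <;> simp [hc]
  · have hm : m ∈ f.support := MvPolynomial.mem_support_iff.mpr hc
    have hdm : m.degree = m.support.card := degree_eq_card hml hm
    have hdd : m.degree ∈ Finset.range (d+1) := by
      rw [Finset.mem_range, Nat.lt_succ_iff]
      calc m.degree = m.sum fun _ e => e := (degree_eq_sum m).symm
        _ ≤ f.totalDegree := le_totalDegree hm
        _ ≤ d := hdeg
    simp_rw [mul_ite, mul_zero]
    rw [Finset.sum_ite_eq, if_pos hdd, hdm]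

lemma A_rec {f : MvPolynomial (Fin n) ℝ} (hml : IsMultilinear f) (hh : IsHarmonic f)
    {k : ℕ} (T : Finset (Fin n)) {j : ℕ} (hjk : j < k) :
    ((k:ℝ) - j) * (∑ S ∈ Finset.univ.filter
        (fun S : Finset (Fin n) => S.card = k ∧ (S ∩ T).card = j), coeff (ind S) f)
    + ((j:ℝ) + 1) * (∑ S ∈ Finset.univ.filter
        (fun S : Finset (Fin n) => S.card = k ∧ (S ∩ T).card = j + 1), coeff (ind S) f)
    = 0 := by
  classical
  set F1 : Finset (Finset (Fin n)) := Finset.univ.filter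
    (fun S : Finset (Fin n) => S.card = k ∧ (S ∩ T).card = j) with hF1
  set F2 : Finset (Finset (Fin n)) := Finset.univ.filter
    (fun S : Finset (Fin n) => S.card = k ∧ (S ∩ T).card = j + 1) with hF2
  set FU : Finset (Finset (Fin n)) := Finset.univ.filter
    (fun U : Finset (Fin n) => U.card = k - 1 ∧ (U ∩ T).card = j) with hFU
  have h0 : ∑ U ∈ FU, (∑ b ∈ Uᶜ, coeff (ind (insert b U)) f) = 0 := by
    apply Finset.sum_eq_zero
    intro U _
    calc ∑ b ∈ Uᶜ, coeff (ind (insert b U)) f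
        = ∑ b ∈ Uᶜ, coeff (ind U + Finsupp.single b 1) f :=
          Finset.sum_congr rfl fun b hb => by rw [ind_insert (Finset.mem_compl.mp hb)]
      _ = 0 := harm_sets hml hh U
  rw [Finset.sum_sigma'] at h0
  -- reindex the sigma sum
  have hre : ∑ q ∈ FU.sigma (fun U => Uᶜ), coeff (ind (insert q.2 q.1)) f
      = ∑ q ∈ (F1.sigma (fun S => S \ T)) ∪ (F2.sigma (fun S => S ∩ T)),
          coeff (ind q.1) f := by
    apply Finset.sum_nbij' (fun q => ⟨insert q.2 q.1, q.2⟩)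
      (fun q => (⟨q.1.erase q.2, q.2⟩ : Σ _ : Finset (Fin n), Fin n))
    · rintro ⟨U, b⟩ hq
      rw [Finset.mem_sigma, hFU, Finset.mem_filter] at hq
      obtain ⟨⟨-, hcard, hint⟩, hb⟩ := hq
      rw [Finset.mem_compl] at hb
      rw [Finset.mem_union]
      by_cases hbT : b ∈ T
      · right
        rw [Finset.mem_sigma, hF2, Finset.mem_filter]
        refine ⟨⟨Finset.mem_univ _, ?_, ?_⟩, ?_⟩
        · rw [Finset.card_insert_of_notMem hb]; omega
        · rw [Finset.insert_inter_of_mem hbT,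
            Finset.card_insert_of_notMem (fun h => hb (Finset.mem_inter.mp h).1)]
          omega
        · exact Finset.mem_inter.mpr ⟨Finset.mem_insert_self _ _, hbT⟩
      · left
        rw [Finset.mem_sigma, hF1, Finset.mem_filter]
        refine ⟨⟨Finset.mem_univ _, ?_, ?_⟩, ?_⟩
        · rw [Finset.card_insert_of_notMem hb]; omega
        · rw [Finset.insert_inter_of_notMem hbT]; exact hint
        · exact Finset.mem_sdiff.mpr ⟨Finset.mem_insert_self _ _, hbT⟩
    · rintro ⟨S, b⟩ hq
      rw [Finset.mem_union] at hq
      rw [Finset.mem_sigma, hFU, Finset.mem_filter]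
      rcases hq with hq | hq
      · rw [Finset.mem_sigma, hF1, Finset.mem_filter] at hq
        obtain ⟨⟨-, hcard, hint⟩, hb⟩ := hq
        rw [Finset.mem_sdiff] at hb
        refine ⟨⟨Finset.mem_univ _, ?_, ?_⟩, Finset.mem_compl.mpr (Finset.notMem_erase _ _)⟩
        · rw [Finset.card_erase_of_mem hb.1]; omega
        · rw [Finset.erase_inter, Finset.erase_eq_of_notMem
            (fun h => hb.2 (Finset.mem_inter.mp h).2)]
          exact hint
      · rw [Finset.mem_sigma, hF2, Finset.mem_filter] at hq
        obtain ⟨⟨-, hcard, hint⟩, hb⟩ := hq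
        rw [Finset.mem_inter] at hb
        refine ⟨⟨Finset.mem_univ _, ?_, ?_⟩, Finset.mem_compl.mpr (Finset.notMem_erase _ _)⟩
        · rw [Finset.card_erase_of_mem hb.1]; omega
        · rw [Finset.erase_inter, Finset.card_erase_of_mem (Finset.mem_inter.mpr hb)]
          omega
    · rintro ⟨U, b⟩ hq
      rw [Finset.mem_sigma] at hq
      rw [Finset.erase_insert (Finset.mem_compl.mp hq.2)]
    · rintro ⟨S, b⟩ hq
      rw [Finset.mem_union] at hq
      have hbS : b ∈ S := by
        rcases hq with hq | hq
        · exact (Finset.mem_sdiff.mp (Finset.mem_sigma.mp hq).2).1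
        · exact (Finset.mem_inter.mp (Finset.mem_sigma.mp hq).2).1
      simp only [Finset.insert_erase hbS]
    · rintro ⟨U, b⟩ _
      rfl
  rw [hre, Finset.sum_union] at h0
  swap
  · rw [Finset.disjoint_left]
    rintro ⟨S, b⟩ h1 h2
    rw [Finset.mem_sigma, hF1, Finset.mem_filter] at h1
    rw [Finset.mem_sigma, hF2, Finset.mem_filter] at h2
    omega
  have e1 : ∑ q ∈ F1.sigma (fun S => S \ T), coeff (ind q.1) f
      = ((k:ℝ) - j) * ∑ S ∈ F1, coeff (ind S) f := by
    rw [Finset.sum_sigma, Finset.mul_sum]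
    apply Finset.sum_congr rfl
    intro S hS
    rw [hF1, Finset.mem_filter] at hS
    dsimp only
    rw [Finset.sum_const, nsmul_eq_mul]
    have hc : (S \ T).card = k - j := by
      have := Finset.card_inter_add_card_sdiff S T
      omega
    have hjk' : j ≤ k := hjk.le
    rw [hc]
    have : ((k - j : ℕ) : ℝ) = (k:ℝ) - j := by
      push_cast [hjk']
      ring
    rw [this]
  have e2 : ∑ q ∈ F2.sigma (fun S => S ∩ T), coeff (ind q.1) f
      = ((j:ℝ) + 1) * ∑ S ∈ F2, coeff (ind S) f := by
    rw [Finset.sum_sigma, Finset.mul_sum]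
    apply Finset.sum_congr rfl
    intro S hS
    rw [hF2, Finset.mem_filter] at hS
    dsimp only
    rw [Finset.sum_const, nsmul_eq_mul, hS.2.2]
    push_cast
    ring
  rw [e1, e2] at h0
  exact h0

lemma A_zero {f : MvPolynomial (Fin n) ℝ} (hml : IsMultilinear f) (hh : IsHarmonic f)
    {k : ℕ} (T : Finset (Fin n)) (hT : T.card < k) (j : ℕ) :
    ∑ S ∈ Finset.univ.filter
        (fun S : Finset (Fin n) => S.card = k ∧ (S ∩ T).card = j), coeff (ind S) f = 0 := by
  have hgt : ∀ j, T.card < j → ∑ S ∈ Finset.univ.filter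
      (fun S : Finset (Fin n) => S.card = k ∧ (S ∩ T).card = j), coeff (ind S) f = 0 := by
    intro j hj
    apply Finset.sum_eq_zero
    intro S hS
    rw [Finset.mem_filter] at hS
    have := Finset.card_le_card (Finset.inter_subset_right (s₁ := S) (s₂ := T))
    omega
  have key : ∀ i j, T.card + 1 - i ≤ j → ∑ S ∈ Finset.univ.filter
      (fun S : Finset (Fin n) => S.card = k ∧ (S ∩ T).card = j), coeff (ind S) f = 0 := by
    intro i
    induction i with
    | zero => intro j hj; exact hgt j (by omega)
    | succ i ih =>
      intro j hj
      by_cases hj2 : T.card + 1 - i ≤ j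
      · exact ih j hj2
      · have hjk : j < k := by omega
        have h := A_rec hml hh T hjk
        rw [ih (j+1) (by omega), mul_zero, add_zero] at h
        have hne : (k:ℝ) - j ≠ 0 := by
          have : (j:ℝ) < k := by exact_mod_cast hjk
          intro heq
          linarith
        exact (mul_eq_zero.mp h).resolve_left hne
  exact key (T.card + 1) j (by omega)

lemma mem_support_HC {f : MvPolynomial (Fin n) ℝ} {k : ℕ} {m : Fin n →₀ ℕ}
    (hm : m ∈ (homogeneousComponent k f).support) : m.degree = k ∧ m ∈ f.support := by
  have h := MvPolynomial.mem_support_iff.mp hm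
  rw [coeff_homogeneousComponent] at h
  by_cases hd : m.degree = k
  · rw [if_pos hd] at h
    exact ⟨hd, MvPolynomial.mem_support_iff.mpr h⟩
  · rw [if_neg hd] at h
    exact absurd rfl h

variable {μ : Measure (Fin n → ℝ)} [IsProbabilityMeasure μ]

lemma ortho_mono {f : MvPolynomial (Fin n) ℝ} (hml : IsMultilinear f) (hh : IsHarmonic f)
    (hinv : ∀ π : Equiv.Perm (Fin n), Measure.map (fun x => x ∘ π) μ = μ)
    (hint : ∀ P : MvPolynomial (Fin n) ℝ, Integrable (fun x => eval x P) μ)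
    {k : ℕ} (T : Finset (Fin n)) (hT : T.card < k) :
    Ev μ (homogeneousComponent k f * monomial (ind T) 1) = 0 := by
  classical
  set g := homogeneousComponent k f with hg
  have hexp : g * monomial (ind T) 1
      = ∑ m ∈ g.support, monomial (m + ind T) (coeff m g) := by
    conv_lhs => rw [MvPolynomial.as_sum g]
    rw [Finset.sum_mul]
    apply Finset.sum_congr rfl
    intro m _
    rw [MvPolynomial.monomial_mul, mul_one]
  rw [hexp, Ev_sum hint]
  have hstep : ∀ m ∈ g.support, Ev μ (monomial (m + ind T) (coeff m g))
      = coeff m f * Ev μ (monomial (m + ind T) 1) := by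
    intro m hm
    have hco : coeff m g = coeff m f := by
      rw [hg, coeff_homogeneousComponent, if_pos (mem_support_HC hm).1]
    rw [← hco]
    have : monomial (m + ind T) (coeff m g) = coeff m g • monomial (m + ind T) (1:ℝ) := by
      rw [MvPolynomial.smul_monomial, smul_eq_mul, mul_one]
    rw [this, Ev_smul]
  rw [Finset.sum_congr rfl hstep]
  -- convert to a sum over finsets of cardinality k
  have hsub : g.support ⊆ (Finset.univ.filter (fun S : Finset (Fin n) => S.card = k)).image ind := by
    intro m hm
    obtain ⟨hdeg, hmf⟩ := mem_support_HC hm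
    have hmml := hml m hmf
    rw [Finset.mem_image]
    exact ⟨m.support, by
      rw [Finset.mem_filter]
      exact ⟨Finset.mem_univ _, by rw [← degree_eq_card hml hmf, hdeg]⟩,
      (eq_ind hmml).symm⟩
  have hzero : ∀ m ∈ (Finset.univ.filter (fun S : Finset (Fin n) => S.card = k)).image ind,
      m ∉ g.support → coeff m f * Ev μ (monomial (m + ind T) 1) = 0 := by
    intro m hm hns
    rw [Finset.mem_image] at hm
    obtain ⟨S, hS, rfl⟩ := hm
    rw [Finset.mem_filter] at hS
    have hdeg : (ind S).degree = k := by rw [ind_degree, hS.2]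
    have hcg : coeff (ind S) g = 0 := MvPolynomial.notMem_support_iff.mp hns
    rw [hg, coeff_homogeneousComponent, if_pos hdeg] at hcg
    rw [hcg, zero_mul]
  rw [Finset.sum_subset hsub hzero]
  rw [Finset.sum_image (fun S _ S' _ h => ind_injective h)]
  -- fiber over the intersection size
  rw [← Finset.sum_fiberwise_of_maps_to
    (g := fun S : Finset (Fin n) => (S ∩ T).card) (t := Finset.range (T.card + 1))
    (fun S _ => Finset.mem_range.mpr (Nat.lt_succ_of_le
      (Finset.card_le_card (Finset.inter_subset_right))))]
  apply Finset.sum_eq_zero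
  intro j _
  rw [Finset.filter_filter]
  set G := Finset.univ.filter (fun S : Finset (Fin n) => S.card = k ∧ (S ∩ T).card = j) with hG
  rcases Finset.eq_empty_or_nonempty G with hGe | ⟨S₀, hS₀⟩
  · rw [hGe, Finset.sum_empty]
  · have hS₀' := Finset.mem_filter.mp hS₀
    calc ∑ S ∈ G, coeff (ind S) f * Ev μ (monomial (ind S + ind T) 1)
        = ∑ S ∈ G, coeff (ind S) f * Ev μ (monomial (ind S₀ + ind T) 1) := by
          apply Finset.sum_congr rfl
          intro S hS
          have hS' := Finset.mem_filter.mp hS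
          rw [moment_eq hinv S S₀ T (by omega) (by omega)]
      _ = (∑ S ∈ G, coeff (ind S) f) * Ev μ (monomial (ind S₀ + ind T) 1) := by
          rw [Finset.sum_mul]
      _ = 0 := by
          rw [hG, A_zero hml hh T hT j, zero_mul]

lemma ortho {f : MvPolynomial (Fin n) ℝ} (hml : IsMultilinear f) (hh : IsHarmonic f)
    (hinv : ∀ π : Equiv.Perm (Fin n), Measure.map (fun x => x ∘ π) μ = μ)
    (hint : ∀ P : MvPolynomial (Fin n) ℝ, Integrable (fun x => eval x P) μ)
    {k l : ℕ} (hlk : l < k) :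
    Ev μ (homogeneousComponent k f * homogeneousComponent l f) = 0 := by
  classical
  have hexp : homogeneousComponent k f * homogeneousComponent l f
      = ∑ m ∈ (homogeneousComponent l f).support,
          coeff m (homogeneousComponent l f) • (homogeneousComponent k f * monomial m 1) := by
    conv_lhs => rw [MvPolynomial.as_sum (homogeneousComponent l f)]
    rw [Finset.mul_sum]
    apply Finset.sum_congr rfl
    intro m _
    rw [show (monomial m) (coeff m (homogeneousComponent l f))
        = coeff m (homogeneousComponent l f) • (monomial m (1:ℝ)) by
      rw [MvPolynomial.smul_monomial, smul_eq_mul, mul_one]]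
    rw [mul_smul_comm]
  rw [hexp, Ev_sum hint]
  apply Finset.sum_eq_zero
  intro m hm
  rw [Ev_smul]
  obtain ⟨hdeg, hmf⟩ := mem_support_HC hm
  have hmml := hml m hmf
  have hmind : m = ind m.support := eq_ind hmml
  have hcard : m.support.card = l := by rw [← degree_eq_card hml hmf, hdeg]
  rw [hmind, ortho_mono hml hh hinv hint m.support (by omega), mul_zero]

lemma pairInf_eq {f : MvPolynomial (Fin n) ℝ}
    (hinv : ∀ π : Equiv.Perm (Fin n), Measure.map (fun x => x ∘ π) μ = μ)
    (hint : ∀ P : MvPolynomial (Fin n) ℝ, Integrable (fun x => eval x P) μ)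
    (i j : Fin n) :
    pairInf μ f i j = Ev μ (f * f) - Ev μ (rename (⇑(Equiv.swap i j)) f * f) := by
  set g := rename (⇑(Equiv.swap i j)) f with hgdef
  have hintegrand : ∀ x : Fin n → ℝ, (eval x g - eval x f)^2 = eval x ((g - f) * (g - f)) := by
    intro x
    rw [map_mul, map_sub]
    ring
  have h1 : pairInf μ f i j = (1/2) * Ev μ ((g - f) * (g - f)) := by
    unfold pairInf Ev
    congr 1
    exact integral_congr_ae (Filter.Eventually.of_forall hintegrand)
  have h2 : (g - f) * (g - f) = g * g + f * f - (g * f + g * f) := by ring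
  have h3 : Ev μ (g * g) = Ev μ (f * f) := by
    rw [hgdef, ← map_mul, Ev_rename hinv]
  rw [h1, h2, Ev_sub hint, Ev_add hint, Ev_add hint, h3]
  ring

lemma half_offDiag (F : Fin n × Fin n → ℝ) (hsym : ∀ p : Fin n × Fin n, F (p.2, p.1) = F p) :
    ∑ p ∈ Finset.univ.filter (fun p : Fin n × Fin n => p.1 < p.2), F p
    = (1/2) * ∑ p ∈ Finset.univ.offDiag, F p := by
  classical
  have hdecomp : (Finset.univ : Finset (Fin n)).offDiag
      = Finset.univ.filter (fun p : Fin n × Fin n => p.1 < p.2)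
        ∪ Finset.univ.filter (fun p : Fin n × Fin n => p.2 < p.1) := by
    ext p
    simp only [Finset.mem_offDiag, Finset.mem_univ, true_and, Finset.mem_union,
      Finset.mem_filter]
    constructor
    · intro h
      rcases lt_or_gt_of_ne h with h' | h'
      · exact Or.inl h'
      · exact Or.inr h'
    · rintro (h | h)
      · exact ne_of_lt h
      · exact (ne_of_lt h).symm
  have hdisj : Disjoint (Finset.univ.filter (fun p : Fin n × Fin n => p.1 < p.2))
      (Finset.univ.filter (fun p : Fin n × Fin n => p.2 < p.1)) := by
    rw [Finset.disjoint_left]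
    intro p h1 h2
    rw [Finset.mem_filter] at h1 h2
    exact absurd h1.2 (lt_asymm h2.2)
  have hswap : ∑ p ∈ Finset.univ.filter (fun p : Fin n × Fin n => p.2 < p.1), F p
      = ∑ p ∈ Finset.univ.filter (fun p : Fin n × Fin n => p.1 < p.2), F p := by
    apply Finset.sum_nbij' (fun p => Prod.swap p) (fun p => Prod.swap p)
    · intro p hp
      rw [Finset.mem_filter] at hp ⊢
      exact ⟨Finset.mem_univ _, hp.2⟩
    · intro p hp
      rw [Finset.mem_filter] at hp ⊢
      exact ⟨Finset.mem_univ _, hp.2⟩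
    · intro p _; exact Prod.swap_swap p
    · intro p _; exact Prod.swap_swap p
    · intro p _
      exact (hsym p).symm
  rw [hdecomp, Finset.sum_union hdisj, hswap]
  ring

variable {f : MvPolynomial (Fin n) ℝ} {d : ℕ}

lemma f_eq_sum_HC (hdeg : f.totalDegree ≤ d) :
    f = ∑ k ∈ Finset.range (d+1), homogeneousComponent k f := by
  have h : ∑ k ∈ Finset.range (f.totalDegree + 1), homogeneousComponent k f
      = ∑ k ∈ Finset.range (d+1), homogeneousComponent k f := by
    apply Finset.sum_subset (Finset.range_subset_range.mpr (by omega))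
    intro k _ hk
    rw [Finset.mem_range] at hk
    exact homogeneousComponent_eq_zero _ _ (by omega)
  rw [← h, sum_homogeneousComponent]

lemma Ev_HC_mul_f (hml : IsMultilinear f) (hh : IsHarmonic f)
    (hinv : ∀ π : Equiv.Perm (Fin n), Measure.map (fun x => x ∘ π) μ = μ)
    (hint : ∀ P : MvPolynomial (Fin n) ℝ, Integrable (fun x => eval x P) μ)
    (hdeg : f.totalDegree ≤ d) {k : ℕ} (hk : k ∈ Finset.range (d+1)) :
    Ev μ (homogeneousComponent k f * f)
      = Ev μ (homogeneousComponent k f * homogeneousComponent k f) := by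
  have hrw : homogeneousComponent k f * f
      = ∑ l ∈ Finset.range (d+1), homogeneousComponent k f * homogeneousComponent l f := by
    set g := homogeneousComponent k f with hgdef
    conv_lhs => rw [f_eq_sum_HC hdeg]
    rw [Finset.mul_sum]
  rw [hrw, Ev_sum hint]
  apply Finset.sum_eq_single_of_mem k hk
  intro l _ hlk
  rcases lt_or_gt_of_ne hlk with h | h
  · exact ortho hml hh hinv hint h
  · rw [mul_comm]
    exact ortho hml hh hinv hint h

lemma Ev_ff (hml : IsMultilinear f) (hh : IsHarmonic f)
    (hinv : ∀ π : Equiv.Perm (Fin n), Measure.map (fun x => x ∘ π) μ = μ)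
    (hint : ∀ P : MvPolynomial (Fin n) ℝ, Integrable (fun x => eval x P) μ)
    (hdeg : f.totalDegree ≤ d) :
    Ev μ (f * f) = ∑ k ∈ Finset.range (d+1),
      Ev μ (homogeneousComponent k f * homogeneousComponent k f) := by
  have hrw : f * f = ∑ k ∈ Finset.range (d+1), homogeneousComponent k f * f := by
    nth_rewrite 1 [f_eq_sum_HC hdeg]
    rw [Finset.sum_mul]
  rw [hrw, Ev_sum hint]
  apply Finset.sum_congr rfl
  intro k hk
  exact Ev_HC_mul_f hml hh hinv hint hdeg hk

lemma Ev_f_eq (hml : IsMultilinear f) (hh : IsHarmonic f)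
    (hinv : ∀ π : Equiv.Perm (Fin n), Measure.map (fun x => x ∘ π) μ = μ)
    (hint : ∀ P : MvPolynomial (Fin n) ℝ, Integrable (fun x => eval x P) μ)
    (hdeg : f.totalDegree ≤ d) :
    Ev μ f = coeff 0 f := by
  conv_lhs => rw [f_eq_sum_HC hdeg]
  rw [Ev_sum hint]
  rw [Finset.sum_eq_single_of_mem 0 (Finset.mem_range.mpr (by omega))]
  · rw [homogeneousComponent_zero, Ev_C]
  · intro k _ hk
    have hk1 : 1 ≤ k := by omega
    have hmul : homogeneousComponent k f
        = homogeneousComponent k f * monomial (ind (∅ : Finset (Fin n))) 1 := by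
      rw [ind_empty]
      rw [show (monomial (0 : Fin n →₀ ℕ) (1:ℝ)) = 1 from rfl, mul_one]
    rw [hmul]
    exact ortho_mono hml hh hinv hint ∅ (by simp only [Finset.card_empty]; omega)

lemma sum_pair_eq (hml : IsMultilinear f) (hh : IsHarmonic f)
    (hinv : ∀ π : Equiv.Perm (Fin n), Measure.map (fun x => x ∘ π) μ = μ)
    (hint : ∀ P : MvPolynomial (Fin n) ℝ, Integrable (fun x => eval x P) μ)
    (hdeg : f.totalDegree ≤ d) :
    ∑ p ∈ Finset.univ.offDiag,
        (Ev μ (f * f) - Ev μ (rename (⇑(Equiv.swap p.1 p.2)) f * f))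
      = ∑ k ∈ Finset.range (d+1), (2 * (k:ℝ) * ((n:ℝ) + 1 - k))
          * Ev μ (homogeneousComponent k f * homogeneousComponent k f) := by
  have h1 : ∀ p : Fin n × Fin n,
      Ev μ (f * f) - Ev μ (rename (⇑(Equiv.swap p.1 p.2)) f * f)
      = Ev μ ((f - rename (⇑(Equiv.swap p.1 p.2)) f) * f) := by
    intro p
    rw [sub_mul, Ev_sub hint]
  calc ∑ p ∈ Finset.univ.offDiag,
        (Ev μ (f * f) - Ev μ (rename (⇑(Equiv.swap p.1 p.2)) f * f))
      = ∑ p ∈ Finset.univ.offDiag, Ev μ ((f - rename (⇑(Equiv.swap p.1 p.2)) f) * f) :=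
        Finset.sum_congr rfl fun p _ => h1 p
    _ = Ev μ ((∑ p ∈ Finset.univ.offDiag, (f - rename (⇑(Equiv.swap p.1 p.2)) f)) * f) := by
        rw [Finset.sum_mul, Ev_sum hint]
    _ = Ev μ ((∑ k ∈ Finset.range (d+1),
          (2 * (k:ℝ) * ((n:ℝ) + 1 - k)) • homogeneousComponent k f) * f) := by
        rw [sumSwap_eq hml hh hdeg]
    _ = ∑ k ∈ Finset.range (d+1), (2 * (k:ℝ) * ((n:ℝ) + 1 - k))
          * Ev μ (homogeneousComponent k f * f) := by
        rw [Finset.sum_mul]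
        simp_rw [smul_mul_assoc]
        rw [Ev_sum hint]
        apply Finset.sum_congr rfl
        intro k _
        rw [Ev_smul]
    _ = ∑ k ∈ Finset.range (d+1), (2 * (k:ℝ) * ((n:ℝ) + 1 - k))
          * Ev μ (homogeneousComponent k f * homogeneousComponent k f) := by
        apply Finset.sum_congr rfl
        intro k hk
        rw [Ev_HC_mul_f hml hh hinv hint hdeg hk]

lemma k_le_n (hml : IsMultilinear f) {k : ℕ} (h0 : homogeneousComponent k f ≠ 0) : k ≤ n := by
  have hne : (homogeneousComponent k f).support.Nonempty := by
    rw [Finset.nonempty_iff_ne_empty, Ne, MvPolynomial.support_eq_empty]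
    exact h0
  obtain ⟨m, hm⟩ := hne
  obtain ⟨hdeg, hmf⟩ := mem_support_HC hm
  have h1 : m.support.card = k := by rw [← degree_eq_card hml hmf, hdeg]
  have h2 := Finset.card_le_univ m.support
  simpa [h1] using h2

end PoincareAux

open PoincareAux in
/-- Poincaré inequality: for a harmonic multilinear polynomial of degree at most `d`,
`Var[f] ≤ Inf[f] ≤ d · Var[f]`. -/
theorem poincare_inequality {n d : ℕ} (μ : Measure (Fin n → ℝ))
    [IsProbabilityMeasure μ] (hinv : PermInvariant μ)
    (hint : ∀ P : MvPolynomial (Fin n) ℝ, Integrable (fun x => eval x P) μ)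
    (f : MvPolynomial (Fin n) ℝ) (hml : IsMultilinear f) (hh : IsHarmonic f)
    (hdeg : f.totalDegree ≤ d) :
    ((∫ x, (eval x f) ^ 2 ∂μ) - (∫ x, eval x f ∂μ) ^ 2 ≤ totalInf μ f) ∧
    totalInf μ f ≤ (d : ℝ) * ((∫ x, (eval x f) ^ 2 ∂μ) - (∫ x, eval x f ∂μ) ^ 2) := by
  classical
  have hinv' : ∀ π : Equiv.Perm (Fin n), Measure.map (fun x => x ∘ π) μ = μ := hinv
  have hEvff : (∫ x, (eval x f) ^ 2 ∂μ) = Ev μ (f * f) := by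
    unfold Ev
    apply integral_congr_ae
    apply Filter.Eventually.of_forall
    intro x
    dsimp only
    rw [map_mul]
    ring
  have hEvf : (∫ x, eval x f ∂μ) = Ev μ f := rfl
  rcases Nat.eq_zero_or_pos n with hn | hn
  · subst hn
    obtain ⟨a, rfl⟩ := MvPolynomial.C_surjective (Fin 0) f
    have h1 : totalInf μ (C a) = 0 := by
      unfold totalInf
      simp
    have h2 : (∫ x, (eval x (C (σ := Fin 0) a)) ^ 2 ∂μ)
        - (∫ x, eval x (C (σ := Fin 0) a) ∂μ) ^ 2 = 0 := by
      simp only [eval_C]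
      rw [integral_const, integral_const]
      simp [measure_univ]
    rw [h1, h2]
    norm_num
  · have hVnn : ∀ k, 0 ≤ Ev μ (homogeneousComponent k f * homogeneousComponent k f) :=
      fun k => Ev_sq_nonneg _
    have h0mem : (0:ℕ) ∈ Finset.range (d+1) := Finset.mem_range.mpr (by omega)
    have hVar : (∫ x, (eval x f) ^ 2 ∂μ) - (∫ x, eval x f ∂μ) ^ 2
        = ∑ k ∈ (Finset.range (d+1)).erase 0,
            Ev μ (homogeneousComponent k f * homogeneousComponent k f) := by
      rw [hEvff, hEvf, Ev_ff hml hh hinv' hint hdeg, Ev_f_eq hml hh hinv' hint hdeg]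
      rw [← Finset.add_sum_erase _ _ h0mem]
      have hV0 : Ev μ (homogeneousComponent 0 f * homogeneousComponent 0 f)
          = (coeff 0 f)^2 := by
        simp only [homogeneousComponent_zero]
        rw [← map_mul, Ev_C]
        ring
      rw [hV0]
      ring
    have hInf : totalInf μ f = (1/(n:ℝ)) * ∑ k ∈ Finset.range (d+1),
        ((k:ℝ) * ((n:ℝ)+1-k)) * Ev μ (homogeneousComponent k f * homogeneousComponent k f) := by
      unfold totalInf
      congr 1
      calc ∑ p ∈ Finset.univ.filter (fun p : Fin n × Fin n => p.1 < p.2), pairInf μ f p.1 p.2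
          = ∑ p ∈ Finset.univ.filter (fun p : Fin n × Fin n => p.1 < p.2),
              (Ev μ (f*f) - Ev μ (rename (⇑(Equiv.swap p.1 p.2)) f * f)) :=
            Finset.sum_congr rfl fun p _ => pairInf_eq hinv' hint p.1 p.2
        _ = (1/2) * ∑ p ∈ (Finset.univ : Finset (Fin n)).offDiag,
              (Ev μ (f*f) - Ev μ (rename (⇑(Equiv.swap p.1 p.2)) f * f)) := by
            apply half_offDiag
            intro p
            dsimp only
            rw [Equiv.swap_comm]
        _ = (1/2) * ∑ k ∈ Finset.range (d+1), (2*(k:ℝ)*((n:ℝ)+1-k))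
              * Ev μ (homogeneousComponent k f * homogeneousComponent k f) := by
            rw [sum_pair_eq hml hh hinv' hint hdeg]
        _ = ∑ k ∈ Finset.range (d+1), ((k:ℝ)*((n:ℝ)+1-k))
              * Ev μ (homogeneousComponent k f * homogeneousComponent k f) := by
            rw [Finset.mul_sum]
            apply Finset.sum_congr rfl
            intro k _
            ring
    have hInfsum : ∑ k ∈ Finset.range (d+1), ((k:ℝ)*((n:ℝ)+1-k))
          * Ev μ (homogeneousComponent k f * homogeneousComponent k f)
        = ∑ k ∈ (Finset.range (d+1)).erase 0, ((k:ℝ)*((n:ℝ)+1-k))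
          * Ev μ (homogeneousComponent k f * homogeneousComponent k f) := by
      rw [← Finset.add_sum_erase _ _ h0mem]
      norm_num
    have hlow : ∀ k ∈ (Finset.range (d+1)).erase 0,
        (n:ℝ) * Ev μ (homogeneousComponent k f * homogeneousComponent k f)
        ≤ ((k:ℝ)*((n:ℝ)+1-k)) * Ev μ (homogeneousComponent k f * homogeneousComponent k f) := by
      intro k hk
      obtain ⟨hk0, hkr⟩ := Finset.mem_erase.mp hk
      have hk1 : (1:ℝ) ≤ k := by exact_mod_cast Nat.one_le_iff_ne_zero.mpr hk0
      rcases eq_or_ne (homogeneousComponent k f) 0 with h0 | h0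
      · rw [h0, mul_zero, Ev_zero]
        simp
      · have hkn : (k:ℝ) ≤ n := by exact_mod_cast k_le_n hml h0
        nlinarith [hVnn k,
          mul_nonneg (mul_nonneg (sub_nonneg.mpr hk1) (sub_nonneg.mpr hkn)) (hVnn k)]
    have hhigh : ∀ k ∈ (Finset.range (d+1)).erase 0,
        ((k:ℝ)*((n:ℝ)+1-k)) * Ev μ (homogeneousComponent k f * homogeneousComponent k f)
        ≤ ((n:ℝ) * d) * Ev μ (homogeneousComponent k f * homogeneousComponent k f) := by
      intro k hk
      obtain ⟨hk0, hkr⟩ := Finset.mem_erase.mp hk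
      have hk1 : (1:ℝ) ≤ k := by exact_mod_cast Nat.one_le_iff_ne_zero.mpr hk0
      have hkd : (k:ℝ) ≤ d := by exact_mod_cast Nat.lt_succ_iff.mp (Finset.mem_range.mp hkr)
      have hn0 : (0:ℝ) ≤ n := by positivity
      nlinarith [hVnn k,
        mul_nonneg (mul_nonneg (sub_nonneg.mpr hk1) hn0) (hVnn k),
        mul_nonneg (sub_nonneg.mpr hkd) (mul_nonneg hn0 (hVnn k)),
        mul_nonneg (mul_nonneg (sub_nonneg.mpr hk1) (sub_nonneg.mpr hk1)) (hVnn k)]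
    have hnpos : (0:ℝ) < n := by exact_mod_cast hn
    constructor
    · rw [hVar, hInf, hInfsum]
      have hsum : (n:ℝ) * ∑ k ∈ (Finset.range (d+1)).erase 0,
            Ev μ (homogeneousComponent k f * homogeneousComponent k f)
          ≤ ∑ k ∈ (Finset.range (d+1)).erase 0, ((k:ℝ)*((n:ℝ)+1-k))
            * Ev μ (homogeneousComponent k f * homogeneousComponent k f) := by
        rw [Finset.mul_sum]
        exact Finset.sum_le_sum hlow
      calc ∑ k ∈ (Finset.range (d+1)).erase 0,
            Ev μ (homogeneousComponent k f * homogeneousComponent k f)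
          = (1/(n:ℝ)) * ((n:ℝ) * ∑ k ∈ (Finset.range (d+1)).erase 0,
              Ev μ (homogeneousComponent k f * homogeneousComponent k f)) := by
            field_simp
        _ ≤ (1/(n:ℝ)) * ∑ k ∈ (Finset.range (d+1)).erase 0, ((k:ℝ)*((n:ℝ)+1-k))
              * Ev μ (homogeneousComponent k f * homogeneousComponent k f) := by
            apply mul_le_mul_of_nonneg_left hsum (by positivity)
    · rw [hVar, hInf, hInfsum]
      have hsum : ∑ k ∈ (Finset.range (d+1)).erase 0, ((k:ℝ)*((n:ℝ)+1-k))
            * Ev μ (homogeneousComponent k f * homogeneousComponent k f)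
          ≤ ((n:ℝ) * d) * ∑ k ∈ (Finset.range (d+1)).erase 0,
              Ev μ (homogeneousComponent k f * homogeneousComponent k f) := by
        rw [Finset.mul_sum]
        exact Finset.sum_le_sum hhigh
      calc (1/(n:ℝ)) * ∑ k ∈ (Finset.range (d+1)).erase 0, ((k:ℝ)*((n:ℝ)+1-k))
              * Ev μ (homogeneousComponent k f * homogeneousComponent k f)
          ≤ (1/(n:ℝ)) * (((n:ℝ) * d) * ∑ k ∈ (Finset.range (d+1)).erase 0,
              Ev μ (homogeneousComponent k f * homogeneousComponent k f)) := by
            apply mul_le_mul_of_nonneg_left hsum (by positivity)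
        _ = (d:ℝ) * ∑ k ∈ (Finset.range (d+1)).erase 0,
              Ev μ (homogeneousComponent k f * homogeneousComponent k f) := by
            field_simp
end
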